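/- arXiv:2107.03975 — 3 statements merged into one kernel-verified Lean document; each statement's English description precedes it below -/
import Mathlib

section
/- Let X = (X_n)_{n≥1} be a process with distribution μ on ℝ^ℕ that has a strong ℓp-characterization with constant limiting function f_{p,μ}. Suppose d₀ = f_{p,μ}(r₀) for some r₀ ∈ (0,1] and d₀ > 0. Then r₀ > 0 and r₀ is the unique r ∈ (0,1] with f_{p,μ}(r) = d₀; moreover, for every r ∈ (0,1) and every sequence of nonnegative integers (k_n) with k_n/n → r, lim_{n→∞} μ_n(A^{n,k_n}_{d₀}) = 1 if r > r₀, and lim_{n→∞} μ_n(A^{n,k_n}_{d₀}) = 0 if r < r₀. -/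
open MeasureTheory Filter Set
open scoped ENNReal Topology Classical

noncomputable section

/-- Left shift on real sequences. -/
def shift : (ℕ → ℝ) → (ℕ → ℝ) := fun x n => x (n + 1)

/-- First `n` coordinates of a sequence. -/
def proj (n : ℕ) (x : ℕ → ℝ) : Fin n → ℝ := fun i => x i

/-- Best `k`-term `ℓp`-approximation error of `x ∈ ℝ^n`. -/
def sigmaP (p : ℝ) (n k : ℕ) (x : Fin n → ℝ) : ℝ :=
  sInf {e : ℝ | ∃ S : Finset (Fin n), S.card = k ∧ e = (∑ i ∈ Sᶜ, |x i| ^ p) ^ (1 / p)}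

/-- Relative best `k`-term `ℓp`-approximation error. -/
def sigmaTilde (p : ℝ) (n k : ℕ) (x : Fin n → ℝ) : ℝ :=
  sigmaP p n k x / (∑ i, |x i| ^ p) ^ (1 / p)

/-- The set `A^{n,k}_d` of vectors with relative approximation error at most `d`. -/
def Ad (p : ℝ) (n k : ℕ) (d : ℝ) : Set (Fin n → ℝ) := {x | sigmaTilde p n k x ≤ d}

/-- `μ_n`: law of the first `n` coordinates. -/
def lawn (μ : Measure (ℕ → ℝ)) (n : ℕ) : Measure (Fin n → ℝ) := μ.map (proj n)

/-- Strong `ℓp`-characterization with constant limiting function `f : (0,1] → [0,1]`. -/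
def StrongLpChar (p : ℝ) (μ : Measure (ℕ → ℝ)) (f : ℝ → ℝ) : Prop :=
  (∀ r ∈ Set.Ioc (0:ℝ) 1, f r ∈ Set.Icc (0:ℝ) 1) ∧
  ∀ r ∈ Set.Ioc (0:ℝ) 1, ∀ k : ℕ → ℕ,
    Tendsto (fun n : ℕ => (k n : ℝ) / n) atTop (𝓝 r) →
    ∀ᵐ x ∂μ, Tendsto (fun n : ℕ => sigmaTilde p n (k n) (proj n x)) atTop (𝓝 (f r))

/-- `κ̃_p(d, ε, μ_n)`. -/
def kappaP (p : ℝ) (μ : Measure (ℕ → ℝ)) (d ε : ℝ) (n : ℕ) : ℕ :=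
  sInf {k : ℕ | 1 ≤ k ∧ k ≤ n ∧ 1 - ε ≤ (lawn μ n (Ad p n k d)).toReal}

/-- `r̃⁺_p(d, ε, μ)`. -/
def rTildePlus (p : ℝ) (μ : Measure (ℕ → ℝ)) (d ε : ℝ) : ℝ :=
  Filter.limsup (fun n : ℕ => (kappaP p μ d ε n : ℝ) / n) atTop

/-- `r̃⁻_p(d, ε, μ)`. -/
def rTildeMinus (p : ℝ) (μ : Measure (ℕ → ℝ)) (d ε : ℝ) : ℝ :=
  Filter.liminf (fun n : ℕ => (kappaP p μ d ε n : ℝ) / n) atTop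

/-- `(r, d)` is `ℓp`-achievable with probability `ε`. -/
def Achievable (p : ℝ) (μ : Measure (ℕ → ℝ)) (d ε r : ℝ) : Prop :=
  ∃ k : ℕ → ℕ, Filter.limsup (fun n : ℕ => (k n : ℝ) / n) atTop ≤ r ∧
    1 - ε ≤ Filter.liminf (fun n : ℕ => (lawn μ n (Ad p n (k n) d)).toReal) atTop

/-- `r_p(d, ε, μ)`: the rate-approximation error function. -/
def rOp (p : ℝ) (μ : Measure (ℕ → ℝ)) (d ε : ℝ) : ℝ :=
  sInf {r : ℝ | r ∈ Set.Icc (0:ℝ) 1 ∧ Achievable p μ d ε r}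

/-- `μ` is AMS with stationary mean `ν`. -/
def HasStationaryMean (μ ν : Measure (ℕ → ℝ)) : Prop :=
  ∀ F : Set (ℕ → ℝ), MeasurableSet F →
    Tendsto (fun n : ℕ => (∑ i ∈ Finset.range n, (μ (shift^[i] ⁻¹' F)).toReal) / n)
      atTop (𝓝 (ν F).toReal)

/-- `μ` is asymptotically mean stationary. -/
def IsAMS (μ : Measure (ℕ → ℝ)) : Prop :=
  ∀ F : Set (ℕ → ℝ), MeasurableSet F →
    ∃ L : ℝ, Tendsto (fun n : ℕ => (∑ i ∈ Finset.range n, (μ (shift^[i] ⁻¹' F)).toReal) / n)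
      atTop (𝓝 L)

/-- `ν` is stationary with respect to the shift. -/
def IsStationaryShift (ν : Measure (ℕ → ℝ)) : Prop :=
  ∀ F : Set (ℕ → ℝ), MeasurableSet F → ν (shift ⁻¹' F) = ν F

/-- `μ` is ergodic with respect to the shift. -/
def IsErgodicShift (μ : Measure (ℕ → ℝ)) : Prop :=
  ∀ F : Set (ℕ → ℝ), MeasurableSet F → shift ⁻¹' F = F → μ F = 0 ∨ μ F = 1

/-- 1D marginal: the law of the first coordinate. -/
def marginal1 (ν : Measure (ℕ → ℝ)) : Measure ℝ := ν.map (fun x => x 0)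

/-- The `p`-th absolute moment `∫ |x|^p dν` (as an extended real). -/
def momentP (p : ℝ) (ν : Measure ℝ) : ℝ≥0∞ := ∫⁻ x, ENNReal.ofReal (|x| ^ p) ∂ν

/-- Tail set `B_τ = (−∞,−τ] ∪ [τ,∞)`. -/
def Btau (τ : ℝ) : Set ℝ := Set.Iic (-τ) ∪ Set.Ici τ

/-- Tail set `C_τ = (−∞,−τ) ∪ (τ,∞)`. -/
def Ctau (τ : ℝ) : Set ℝ := Set.Iio (-τ) ∪ Set.Ioi τ

/-- Tail distribution function `φ_ν(τ) = ν(B_τ)`. -/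
def phiTail (ν : Measure ℝ) (τ : ℝ) : ℝ := (ν (Btau τ)).toReal

/-- `v_p(B) = (∫_B |x|^p dν) / (∫_ℝ |x|^p dν)`. -/
def vP (p : ℝ) (ν : Measure ℝ) (B : Set ℝ) : ℝ :=
  ((∫⁻ x in B, ENNReal.ofReal (|x| ^ p) ∂ν) / momentP p ν).toReal

/-- The rate vs approximation error graph `F_ν`. -/
def Fgraph (p : ℝ) (ν : Measure ℝ) : Set (ℝ × ℝ) :=
  {q | ∃ τ : ℝ, 0 ≤ τ ∧ q = (phiTail ν τ, (1 - vP p ν (Btau τ)) ^ (1 / p))} ∪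
  {q | ∃ τ : ℝ, 0 ≤ τ ∧ 0 < (ν ({-τ, τ} : Set ℝ)).toReal ∧
       ∃ α ∈ Set.Ico (0:ℝ) 1,
         q = ((ν (Ctau τ)).toReal + α * (ν ({-τ, τ} : Set ℝ)).toReal,
              (1 - vP p ν (Ctau τ) - α * vP p ν ({-τ, τ} : Set ℝ)) ^ (1 / p))}

/-- Approximation error function `f_{p,ν} : (0,1] → [0,1)`, defined through its graph `F_ν`,
with the convention `f_{p,ν} ≡ 0` when the `p`-th moment of `ν` is infinite. -/
def fApprox (p : ℝ) (ν : Measure ℝ) (r : ℝ) : ℝ :=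
  if momentP p ν = ∞ then 0 else sSup {d : ℝ | (r, d) ∈ Fgraph p ν}


namespace SCPTaux

open Finset in
/-- Minimum over subsets of cardinality `j` of the subset sum of `g`. -/
def tmin {n : ℕ} (g : Fin n → ℝ) (j : ℕ) : ℝ :=
  sInf {s : ℝ | ∃ C : Finset (Fin n), C.card = j ∧ s = ∑ i ∈ C, g i}

lemma tset_eq {n : ℕ} (g : Fin n → ℝ) (j : ℕ) :
    {s : ℝ | ∃ C : Finset (Fin n), C.card = j ∧ s = ∑ i ∈ C, g i}
      = (fun C : Finset (Fin n) => ∑ i ∈ C, g i) '' {C | C.card = j} := by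
  ext s
  simp only [Set.mem_setOf_eq, Set.mem_image]
  constructor
  · rintro ⟨C, hC, rfl⟩; exact ⟨C, hC, rfl⟩
  · rintro ⟨C, hC, rfl⟩; exact ⟨C, hC, rfl⟩

lemma tset_finite {n : ℕ} (g : Fin n → ℝ) (j : ℕ) :
    Set.Finite {s : ℝ | ∃ C : Finset (Fin n), C.card = j ∧ s = ∑ i ∈ C, g i} := by
  rw [tset_eq]
  exact Set.Finite.image _ (Set.toFinite _)

lemma tset_nonempty {n : ℕ} (g : Fin n → ℝ) {j : ℕ} (hj : j ≤ n) :
    Set.Nonempty {s : ℝ | ∃ C : Finset (Fin n), C.card = j ∧ s = ∑ i ∈ C, g i} := by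
  obtain ⟨C, -, hC⟩ := Finset.exists_subset_card_eq
    (show j ≤ (Finset.univ : Finset (Fin n)).card by simpa using hj)
  exact ⟨∑ i ∈ C, g i, C, hC, rfl⟩

lemma tmin_le {n : ℕ} (g : Fin n → ℝ) {j : ℕ} (C : Finset (Fin n)) (hC : C.card = j) :
    tmin g j ≤ ∑ i ∈ C, g i :=
  csInf_le (tset_finite g j).bddBelow ⟨C, hC, rfl⟩

lemma tmin_attained {n : ℕ} (g : Fin n → ℝ) {j : ℕ} (hj : j ≤ n) :
    ∃ C : Finset (Fin n), C.card = j ∧ tmin g j = ∑ i ∈ C, g i :=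
  (tset_nonempty g hj).csInf_mem (tset_finite g j)

lemma tmin_nonneg {n : ℕ} {g : Fin n → ℝ} (hg : ∀ i, 0 ≤ g i) {j : ℕ} (hj : j ≤ n) :
    0 ≤ tmin g j := by
  obtain ⟨C, -, hC⟩ := tmin_attained g hj
  rw [hC]
  exact Finset.sum_nonneg fun i _ => hg i

lemma tmin_zero {n : ℕ} (g : Fin n → ℝ) : tmin g 0 = 0 := by
  have h1 : tmin g 0 ≤ ∑ i ∈ (∅ : Finset (Fin n)), g i := tmin_le g ∅ rfl
  have h2 : ∑ i ∈ (∅ : Finset (Fin n)), g i ≤ tmin g 0 := by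
    obtain ⟨C, hC, hC2⟩ := tmin_attained g (Nat.zero_le n)
    rw [Finset.card_eq_zero] at hC
    rw [hC2, hC]
  simp only [Finset.sum_empty] at h1 h2
  linarith

lemma tmin_mono {n : ℕ} {g : Fin n → ℝ} (hg : ∀ i, 0 ≤ g i) {j j' : ℕ}
    (h : j ≤ j') (hj' : j' ≤ n) : tmin g j ≤ tmin g j' := by
  obtain ⟨C', hC', hval⟩ := tmin_attained g hj'
  obtain ⟨C, hCsub, hC⟩ := Finset.exists_subset_card_eq (show j ≤ C'.card by omega)
  calc tmin g j ≤ ∑ i ∈ C, g i := tmin_le g C hC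
    _ ≤ ∑ i ∈ C', g i := Finset.sum_le_sum_of_subset_of_nonneg hCsub fun i _ _ => hg i
    _ = tmin g j' := hval.symm

lemma tmin_step {n : ℕ} {g : Fin n → ℝ} (hg : ∀ i, 0 ≤ g i) {j : ℕ}
    (hj : j + 1 ≤ n) : ((j : ℝ) + 1) * tmin g j ≤ (j : ℝ) * tmin g (j + 1) := by
  obtain ⟨C', hC', hval⟩ := tmin_attained g hj
  have key : ∀ i ∈ C', tmin g j ≤ ∑ x ∈ C'.erase i, g x := by
    intro i hi
    exact tmin_le g (C'.erase i) (by rw [Finset.card_erase_of_mem hi, hC']; omega)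
  have hsum : ∑ i ∈ C', (∑ x ∈ C'.erase i, g x) = (j : ℝ) * ∑ x ∈ C', g x := by
    have : ∀ i ∈ C', ∑ x ∈ C'.erase i, g x = (∑ x ∈ C', g x) - g i := by
      intro i hi
      rw [Finset.sum_erase_eq_sub hi]
    rw [Finset.sum_congr rfl this, Finset.sum_sub_distrib, Finset.sum_const, hC']
    push_cast
    ring
  have hle : ∑ i ∈ C', tmin g j ≤ ∑ i ∈ C', (∑ x ∈ C'.erase i, g x) :=
    Finset.sum_le_sum key
  rw [Finset.sum_const, hC', hsum, nsmul_eq_mul] at hle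
  rw [hval]
  push_cast at hle ⊢
  linarith

lemma tmin_chain {n : ℕ} {g : Fin n → ℝ} (hg : ∀ i, 0 ≤ g i) {j j' : ℕ}
    (h : j ≤ j') : j' ≤ n → (j' : ℝ) * tmin g j ≤ (j : ℝ) * tmin g j' := by
  induction j', h using Nat.le_induction with
  | base => exact fun _ => le_refl _
  | succ m hm ih =>
    intro hj'
    have hmn : m ≤ n := by omega
    have IH := ih hmn
    have hstep : ((m : ℝ) + 1) * tmin g m ≤ (m : ℝ) * tmin g (m + 1) :=
      tmin_step hg (by omega)
    rcases Nat.eq_zero_or_pos m with hm0 | hmpos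
    · subst hm0
      have hj0 : j = 0 := Nat.le_zero.mp hm
      subst hj0
      simp [tmin_zero]
    · have hmR : (0:ℝ) < (m : ℝ) := by exact_mod_cast hmpos
      have h1 : ((m:ℝ) + 1) * ((m : ℝ) * tmin g j) ≤ ((m:ℝ) + 1) * ((j : ℝ) * tmin g m) :=
        mul_le_mul_of_nonneg_left IH (by positivity)
      have h2 : (j : ℝ) * (((m : ℝ) + 1) * tmin g m) ≤ (j : ℝ) * ((m : ℝ) * tmin g (m + 1)) :=
        mul_le_mul_of_nonneg_left hstep (Nat.cast_nonneg j)
      have h3 : (m : ℝ) * (((m:ℝ) + 1) * tmin g j) ≤ (m : ℝ) * ((j : ℝ) * tmin g (m + 1)) := by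
        nlinarith
      have h4 := le_of_mul_le_mul_left h3 hmR
      push_cast
      linarith [h4]

lemma tmin_chain' {n : ℕ} {g : Fin n → ℝ} (hg : ∀ i, 0 ≤ g i) {j j' : ℕ}
    (h : j ≤ j') (hj' : j' ≤ n) : (j' : ℝ) * tmin g j ≤ (j : ℝ) * tmin g j' :=
  tmin_chain hg h hj'

end SCPTaux

open SCPTaux

lemma sigmaP_set_eq {p : ℝ} {n k : ℕ} (hk : k ≤ n) (x : Fin n → ℝ) :
    {e : ℝ | ∃ S : Finset (Fin n), S.card = k ∧ e = (∑ i ∈ Sᶜ, |x i| ^ p) ^ (1 / p)}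
      = (fun s : ℝ => s ^ (1/p)) ''
        {s : ℝ | ∃ C : Finset (Fin n), C.card = n - k ∧ s = ∑ i ∈ C, |x i| ^ p} := by
  ext e
  simp only [Set.mem_setOf_eq, Set.mem_image]
  constructor
  · rintro ⟨S, hS, rfl⟩
    refine ⟨∑ i ∈ Sᶜ, |x i| ^ p, ⟨Sᶜ, ?_, rfl⟩, rfl⟩
    rw [Finset.card_compl, hS, Fintype.card_fin]
  · rintro ⟨s, ⟨C, hC, rfl⟩, rfl⟩
    refine ⟨Cᶜ, ?_, ?_⟩
    · rw [Finset.card_compl, hC, Fintype.card_fin]; omega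
    · rw [compl_compl]

lemma sigmaP_eq_tmin {p : ℝ} (hp : 0 < p) {n k : ℕ} (hk : k ≤ n) (x : Fin n → ℝ) :
    sigmaP p n k x = (tmin (fun i => |x i| ^ p) (n - k)) ^ (1 / p) := by
  have hg : ∀ i, (0:ℝ) ≤ |x i| ^ p := fun i => Real.rpow_nonneg (abs_nonneg _) p
  rw [sigmaP, sigmaP_set_eq hk]
  obtain ⟨C, hC, hval⟩ := tmin_attained (fun i => |x i| ^ p) (Nat.sub_le n k)
  have hbdd0 : BddBelow ((fun s : ℝ => s ^ (1/p)) ''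
      {s : ℝ | ∃ C : Finset (Fin n), C.card = n - k ∧ s = ∑ i ∈ C, |x i| ^ p}) := by
    refine ⟨0, ?_⟩
    rintro e ⟨s, ⟨C', hC', rfl⟩, rfl⟩
    exact Real.rpow_nonneg (Finset.sum_nonneg fun i _ => hg i) _
  apply le_antisymm
  · exact csInf_le hbdd0 ⟨tmin (fun i => |x i| ^ p) (n - k), ⟨C, hC, hval⟩, rfl⟩
  · refine le_csInf ⟨(∑ i ∈ C, |x i| ^ p) ^ (1/p),
      ⟨∑ i ∈ C, |x i| ^ p, ⟨C, hC, rfl⟩, rfl⟩⟩ ?_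
    rintro e ⟨s, ⟨C', hC', rfl⟩, rfl⟩
    exact Real.rpow_le_rpow (tmin_nonneg hg (Nat.sub_le n k))
      (tmin_le _ C' hC') (by positivity)

lemma sigmaTilde_pow {p : ℝ} (hp : 0 < p) {n k : ℕ} (hk : k ≤ n) (x : Fin n → ℝ) :
    (sigmaTilde p n k x) ^ p
      = tmin (fun i => |x i| ^ p) (n - k) / (∑ i, |x i| ^ p) := by
  have hg : ∀ i, (0:ℝ) ≤ |x i| ^ p := fun i => Real.rpow_nonneg (abs_nonneg _) p
  have hT : (0:ℝ) ≤ ∑ i, |x i| ^ p := Finset.sum_nonneg fun i _ => hg i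
  have hm : (0:ℝ) ≤ tmin (fun i => |x i| ^ p) (n - k) := tmin_nonneg hg (Nat.sub_le n k)
  rw [sigmaTilde, sigmaP_eq_tmin hp hk, ← Real.div_rpow hm hT,
    ← Real.rpow_mul (div_nonneg hm hT), one_div, inv_mul_cancel₀ hp.ne', Real.rpow_one]

lemma measurable_proj (n : ℕ) : Measurable (proj n) :=
  measurable_pi_lambda _ fun i => measurable_pi_apply _

lemma div_le_div_nonneg_right' {a b c : ℝ} (h : a ≤ b) (hc : 0 ≤ c) : a / c ≤ b / c := by
  rcases hc.eq_or_lt with rfl | hc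
  · simp
  · exact (div_le_div_iff_of_pos_right hc).mpr h

lemma measurableSet_Ad {p : ℝ} (hp : 0 < p) {n k : ℕ} {d : ℝ} (hd : 0 < d) :
    MeasurableSet (Ad p n k d) := by
  rcases le_or_gt k n with hk | hk
  · have key : Ad p n k d = ⋃ (S : Finset (Fin n)) (_ : S.card = k),
        {x : Fin n → ℝ |
          (∑ i ∈ Sᶜ, |x i| ^ p) ^ (1/p) / (∑ i, |x i| ^ p) ^ (1/p) ≤ d} := by
      ext x
      have hg : ∀ i, (0:ℝ) ≤ |x i| ^ p := fun i => Real.rpow_nonneg (abs_nonneg _) p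
      have hτ : (0:ℝ) ≤ (∑ i, |x i| ^ p) ^ (1/p) :=
        Real.rpow_nonneg (Finset.sum_nonneg fun i _ => hg i) _
      have hbdd : BddBelow {e : ℝ | ∃ S : Finset (Fin n), S.card = k ∧
          e = (∑ i ∈ Sᶜ, |x i| ^ p) ^ (1 / p)} := by
        refine ⟨0, ?_⟩
        rintro e ⟨S, hS, rfl⟩
        exact Real.rpow_nonneg (Finset.sum_nonneg fun i _ => hg i) _
      simp only [Ad, sigmaTilde, sigmaP, Set.mem_setOf_eq, Set.mem_iUnion]
      constructor
      · intro hx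
        have hne : Set.Nonempty {e : ℝ | ∃ S : Finset (Fin n), S.card = k ∧
            e = (∑ i ∈ Sᶜ, |x i| ^ p) ^ (1 / p)} := by
          obtain ⟨S, -, hS⟩ := Finset.exists_subset_card_eq
            (show k ≤ (Finset.univ : Finset (Fin n)).card by simpa using hk)
          exact ⟨_, S, hS, rfl⟩
        have hfin : Set.Finite {e : ℝ | ∃ S : Finset (Fin n), S.card = k ∧
            e = (∑ i ∈ Sᶜ, |x i| ^ p) ^ (1 / p)} := by
          rw [sigmaP_set_eq hk]
          exact Set.Finite.image _ (tset_finite _ _)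
        obtain ⟨S, hS, hval⟩ := hne.csInf_mem hfin
        exact ⟨S, hS, by rw [← hval]; exact hx⟩
      · rintro ⟨S, hS, hx⟩
        exact le_trans (div_le_div_nonneg_right' (csInf_le hbdd ⟨S, hS, rfl⟩) hτ) hx
    rw [key]
    refine MeasurableSet.iUnion fun S => MeasurableSet.iUnion fun _ => ?_
    have habs : ∀ i : Fin n, Measurable fun x : Fin n → ℝ => |x i| ^ p := fun i =>
      (Real.continuous_rpow_const hp.le).measurable.comp (measurable_pi_apply i).abs
    have h1 : Measurable fun x : Fin n → ℝ =>
        (∑ i ∈ Sᶜ, |x i| ^ p) ^ (1/p) / (∑ i, |x i| ^ p) ^ (1/p) := by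
      refine Measurable.div ?_ ?_
      · exact (Real.continuous_rpow_const (by positivity)).measurable.comp
          (Finset.measurable_sum _ fun i _ => habs i)
      · exact (Real.continuous_rpow_const (by positivity)).measurable.comp
          (Finset.measurable_sum _ fun i _ => habs i)
    exact measurableSet_le h1 measurable_const
  · have key : Ad p n k d = Set.univ := by
      ext x
      simp only [Ad, Set.mem_setOf_eq, Set.mem_univ, iff_true]
      have hemp : {e : ℝ | ∃ S : Finset (Fin n), S.card = k ∧
          e = (∑ i ∈ Sᶜ, |x i| ^ p) ^ (1 / p)} = ∅ := by
        ext e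
        simp only [Set.mem_setOf_eq, Set.mem_empty_iff_false, iff_false, not_exists]
        rintro S ⟨hS, -⟩
        have h1 : S.card ≤ n := le_trans (Finset.card_le_univ S) (by simp)
        omega
      rw [sigmaTilde, sigmaP, hemp, Real.sInf_empty, zero_div]
      exact hd.le
    rw [key]
    exact MeasurableSet.univ


lemma floor_tendsto {r : ℝ} (hr0 : 0 ≤ r) :
    Tendsto (fun n : ℕ => ((⌊r * n⌋₊ : ℝ)) / n) atTop (𝓝 r) := by
  have hlow : Tendsto (fun n : ℕ => r - 1 / (n:ℝ)) atTop (𝓝 r) := by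
    simpa using tendsto_const_nhds.sub (tendsto_one_div_atTop_nhds_zero_nat (𝕜 := ℝ))
  refine tendsto_of_tendsto_of_tendsto_of_le_of_le'
    hlow (tendsto_const_nhds : Tendsto (fun _ : ℕ => r) atTop (𝓝 r)) ?_ ?_
  · filter_upwards [eventually_ge_atTop 1] with n hn
    have hnpos : (0:ℝ) < n := by exact_mod_cast hn
    have h1 : r * n - 1 ≤ ((⌊r * (n:ℝ)⌋₊ : ℝ)) := (Nat.sub_one_lt_floor (r * n)).le
    have h3 : r - 1/(n:ℝ) = (r*n - 1)/n := by field_simp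
    rw [h3]
    exact div_le_div_nonneg_right' h1 hnpos.le
  · filter_upwards [eventually_ge_atTop 1] with n hn
    have hnpos : (0:ℝ) < n := by exact_mod_cast hn
    rw [div_le_iff₀ hnpos]
    calc ((⌊r * (n:ℝ)⌋₊ : ℝ)) ≤ r * n := Nat.floor_le (by positivity)
      _ = r * n := rfl

lemma floor_le_n {r : ℝ} (hr1 : r ≤ 1) (n : ℕ) : ⌊r * n⌋₊ ≤ n := by
  calc ⌊r * (n:ℝ)⌋₊ ≤ ⌊((n:ℕ):ℝ)⌋₊ :=
        Nat.floor_le_floor (mul_le_of_le_one_left (Nat.cast_nonneg n) hr1)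
    _ = n := Nat.floor_natCast n

lemma sigmaTilde_anti {p : ℝ} (hp : 0 < p) {n a b : ℕ} (hab : a ≤ b) (hb : b ≤ n)
    (x : Fin n → ℝ) : sigmaTilde p n b x ≤ sigmaTilde p n a x := by
  have hg : ∀ i, (0:ℝ) ≤ |x i| ^ p := fun i => Real.rpow_nonneg (abs_nonneg _) p
  have hτ : (0:ℝ) ≤ (∑ i, |x i| ^ p) ^ (1/p) :=
    Real.rpow_nonneg (Finset.sum_nonneg fun i _ => hg i) _
  unfold sigmaTilde
  refine div_le_div_nonneg_right' ?_ hτ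
  rw [sigmaP_eq_tmin hp (le_trans hab hb), sigmaP_eq_tmin hp hb]
  exact Real.rpow_le_rpow (tmin_nonneg hg (Nat.sub_le _ _))
    (tmin_mono hg (Nat.sub_le_sub_left hab n) (Nat.sub_le _ _)) (by positivity)

lemma f_mono {p : ℝ} (hp : 0 < p) {μ : Measure (ℕ → ℝ)} [IsProbabilityMeasure μ]
    {f : ℝ → ℝ} (hchar : StrongLpChar p μ f) {r1 r2 : ℝ}
    (h1 : r1 ∈ Set.Ioc (0:ℝ) 1) (h2 : r2 ∈ Set.Ioc (0:ℝ) 1) (h12 : r1 ≤ r2) :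
    f r2 ≤ f r1 := by
  haveI : (MeasureTheory.ae μ).NeBot := ae_neBot.mpr (IsProbabilityMeasure.ne_zero μ)
  have hk1 : Tendsto (fun n : ℕ => ((⌊r1 * n⌋₊ : ℝ))/n) atTop (𝓝 r1) := floor_tendsto h1.1.le
  have hk2 : Tendsto (fun n : ℕ => ((⌊r2 * n⌋₊ : ℝ))/n) atTop (𝓝 r2) := floor_tendsto h2.1.le
  have a1 := hchar.2 r1 h1 (fun n => ⌊r1 * n⌋₊) hk1
  have a2 := hchar.2 r2 h2 (fun n => ⌊r2 * n⌋₊) hk2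
  obtain ⟨x, hx1, hx2⟩ := (a1.and a2).exists
  refine le_of_tendsto_of_tendsto' hx2 hx1 ?_
  intro n
  exact sigmaTilde_anti hp
    (Nat.floor_le_floor (mul_le_mul_of_nonneg_right h12 (Nat.cast_nonneg n)))
    (floor_le_n h2.2 n) (proj n x)

lemma f_strict {p : ℝ} (hp : 0 < p) {μ : Measure (ℕ → ℝ)} [IsProbabilityMeasure μ]
    {f : ℝ → ℝ} (hchar : StrongLpChar p μ f) {r1 r2 : ℝ}
    (h1 : r1 ∈ Set.Ioc (0:ℝ) 1) (h2 : r2 ∈ Set.Ioc (0:ℝ) 1) (h12 : r1 < r2)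
    (heq : f r1 = f r2) (hpos : 0 < f r2) : False := by
  haveI : (MeasureTheory.ae μ).NeBot := ae_neBot.mpr (IsProbabilityMeasure.ne_zero μ)
  set d := f r2 with hddef
  set k1 : ℕ → ℕ := fun n => ⌊r1 * n⌋₊ with hk1def
  set k2 : ℕ → ℕ := fun n => ⌊r2 * n⌋₊ with hk2def
  have hk1 : Tendsto (fun n : ℕ => ((k1 n : ℝ))/n) atTop (𝓝 r1) := floor_tendsto h1.1.le
  have hk2 : Tendsto (fun n : ℕ => ((k2 n : ℝ))/n) atTop (𝓝 r2) := floor_tendsto h2.1.le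
  have a1 := hchar.2 r1 h1 k1 hk1
  have a2 := hchar.2 r2 h2 k2 hk2
  obtain ⟨x, hx1, hx2⟩ := (a1.and a2).exists
  rw [heq] at hx1
  have hk1n : ∀ n, k1 n ≤ n := floor_le_n h1.2
  have hk2n : ∀ n, k2 n ≤ n := floor_le_n h2.2
  have evlt : ∀ᶠ n : ℕ in atTop, k1 n < k2 n := by
    have hmid1 : r1 < (r1 + r2)/2 := by linarith
    have hmid2 : (r1 + r2)/2 < r2 := by linarith
    filter_upwards [hk1.eventually (gt_mem_nhds hmid1),
      hk2.eventually (lt_mem_nhds hmid2), eventually_ge_atTop 1] with n e1 e2 hn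
    have hnpos : (0:ℝ) < n := by exact_mod_cast hn
    have hlt := mul_lt_mul_of_pos_right (e1.trans e2) hnpos
    rw [div_mul_cancel₀ _ hnpos.ne', div_mul_cancel₀ _ hnpos.ne'] at hlt
    exact_mod_cast hlt
  have evT : ∀ᶠ n : ℕ in atTop, 0 < ∑ i : Fin n, |proj n x i| ^ p := by
    filter_upwards [hx1.eventually (lt_mem_nhds (show d/2 < d by linarith))] with n hn
    by_contra hT
    have hg : ∀ i : Fin n, (0:ℝ) ≤ |proj n x i| ^ p :=
      fun i => Real.rpow_nonneg (abs_nonneg _) p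
    have hT0 : ∑ i : Fin n, |proj n x i| ^ p = 0 :=
      le_antisymm (not_lt.mp hT) (Finset.sum_nonneg fun i _ => hg i)
    have hzero : sigmaTilde p n (k1 n) (proj n x) = 0 := by
      rw [sigmaTilde, hT0, Real.zero_rpow (one_div_ne_zero hp.ne'), div_zero]
    rw [hzero] at hn
    linarith
  have evineq : ∀ᶠ n : ℕ in atTop,
      (1 - (k1 n : ℝ)/n) * (sigmaTilde p n (k2 n) (proj n x)) ^ p
        ≤ (1 - (k2 n : ℝ)/n) * (sigmaTilde p n (k1 n) (proj n x)) ^ p := by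
    filter_upwards [evlt, evT, eventually_ge_atTop 1] with n hlt hT hn1
    have hnpos : (0:ℝ) < n := by exact_mod_cast hn1
    have hg : ∀ i : Fin n, (0:ℝ) ≤ |proj n x i| ^ p :=
      fun i => Real.rpow_nonneg (abs_nonneg _) p
    have hchain := tmin_chain' hg (Nat.sub_le_sub_left hlt.le n) (Nat.sub_le n (k1 n))
    have e1 : (sigmaTilde p n (k1 n) (proj n x)) ^ p
        = tmin (fun i => |proj n x i| ^ p) (n - k1 n) / (∑ i, |proj n x i| ^ p) :=
      sigmaTilde_pow hp (hk1n n) _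
    have e2 : (sigmaTilde p n (k2 n) (proj n x)) ^ p
        = tmin (fun i => |proj n x i| ^ p) (n - k2 n) / (∑ i, |proj n x i| ^ p) :=
      sigmaTilde_pow hp (hk2n n) _
    have hc1 : ((n - k1 n : ℕ) : ℝ) = (n:ℝ) - k1 n := by
      rw [Nat.cast_sub (hk1n n)]
    have hc2 : ((n - k2 n : ℕ) : ℝ) = (n:ℝ) - k2 n := by
      rw [Nat.cast_sub (hk2n n)]
    rw [e1, e2]
    set T := ∑ i : Fin n, |proj n x i| ^ p with hTdef
    set m1 := tmin (fun i => |proj n x i| ^ p) (n - k1 n) with hm1def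
    set m2 := tmin (fun i => |proj n x i| ^ p) (n - k2 n) with hm2def
    have hq1 : (1 - (k1 n : ℝ)/n) * (m2 / T) = (((n - k1 n : ℕ):ℝ) * m2) / (T * n) := by
      rw [hc1, one_sub_div hnpos.ne', div_mul_div_comm, mul_comm T (n:ℝ)]
    have hq2 : (1 - (k2 n : ℝ)/n) * (m1 / T) = (((n - k2 n : ℕ):ℝ) * m1) / (T * n) := by
      rw [hc2, one_sub_div hnpos.ne', div_mul_div_comm, mul_comm T (n:ℝ)]
    rw [hq1, hq2]
    exact div_le_div_nonneg_right' hchain (by positivity)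
  have hcont : ContinuousAt (fun y : ℝ => y ^ p) d :=
    Real.continuousAt_rpow_const d p (Or.inr hp.le)
  have l1 : Tendsto (fun n => (sigmaTilde p n (k1 n) (proj n x)) ^ p) atTop (𝓝 (d ^ p)) :=
    hcont.tendsto.comp hx1
  have l2 : Tendsto (fun n => (sigmaTilde p n (k2 n) (proj n x)) ^ p) atTop (𝓝 (d ^ p)) :=
    hcont.tendsto.comp hx2
  have L1 : Tendsto (fun n : ℕ => (1 - (k1 n : ℝ)/n) * (sigmaTilde p n (k2 n) (proj n x)) ^ p)
      atTop (𝓝 ((1 - r1) * d ^ p)) := (tendsto_const_nhds.sub hk1).mul l2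
  have L2 : Tendsto (fun n : ℕ => (1 - (k2 n : ℝ)/n) * (sigmaTilde p n (k1 n) (proj n x)) ^ p)
      atTop (𝓝 ((1 - r2) * d ^ p)) := (tendsto_const_nhds.sub hk2).mul l1
  have hfinal : (1 - r1) * d ^ p ≤ (1 - r2) * d ^ p :=
    le_of_tendsto_of_tendsto L1 L2 evineq
  have hdp : 0 < d ^ p := Real.rpow_pos_of_pos hpos p
  nlinarith

/-- Lemma 1(i): phase transition for a process with a strong `ℓp`-characterization and
constant limiting function, at a positive distortion level `d₀ = f(r₀)`. -/
theorem strong_char_phase_transition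
    (p : ℝ) (hp : 0 < p) (μ : Measure (ℕ → ℝ)) [IsProbabilityMeasure μ]
    (f : ℝ → ℝ) (hchar : StrongLpChar p μ f)
    (r₀ d₀ : ℝ) (hr₀ : r₀ ∈ Set.Ioc (0:ℝ) 1) (hd₀ : d₀ = f r₀) (hd₀pos : 0 < d₀) :
    0 < r₀ ∧
    (∀ r ∈ Set.Ioc (0:ℝ) 1, f r = d₀ → r = r₀) ∧
    (∀ r ∈ Set.Ioo (0:ℝ) 1, ∀ k : ℕ → ℕ,
      Tendsto (fun n : ℕ => (k n : ℝ) / n) atTop (𝓝 r) →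
      (r₀ < r →
        Tendsto (fun n : ℕ => (lawn μ n (Ad p n (k n) d₀)).toReal) atTop (𝓝 1)) ∧
      (r < r₀ →
        Tendsto (fun n : ℕ => (lawn μ n (Ad p n (k n) d₀)).toReal) atTop (𝓝 0))) := by
  have huniq : ∀ r ∈ Set.Ioc (0:ℝ) 1, f r = d₀ → r = r₀ := by
    intro r hr hfr
    by_contra hne
    rcases lt_or_gt_of_ne hne with hlt | hgt
    · exact f_strict hp hchar hr hr₀ hlt (hfr.trans hd₀)
        (by rw [← hd₀]; exact hd₀pos)
    · exact f_strict hp hchar hr₀ hr hgt ((hd₀.symm).trans hfr.symm)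
        (by rw [hfr]; exact hd₀pos)
  refine ⟨hr₀.1, huniq, ?_⟩
  intro r hr k hk
  have hrIoc : r ∈ Set.Ioc (0:ℝ) 1 := ⟨hr.1, hr.2.le⟩
  have hmble : ∀ n, MeasurableSet (proj n ⁻¹' Ad p n (k n) d₀) :=
    fun n => (measurable_proj n) (measurableSet_Ad hp hd₀pos)
  have hlaw : ∀ n, lawn μ n (Ad p n (k n) d₀) = μ (proj n ⁻¹' Ad p n (k n) d₀) :=
    fun n => Measure.map_apply (measurable_proj n) (measurableSet_Ad hp hd₀pos)
  have hae := hchar.2 r hrIoc k hk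
  constructor
  · intro hgt
    have hflt : f r < d₀ := by
      have hfle : f r ≤ d₀ := by rw [hd₀]; exact f_mono hp hchar hr₀ hrIoc hgt.le
      rcases hfle.lt_or_eq with h | h
      · exact h
      · exact absurd (huniq r hrIoc h) (ne_of_gt hgt)
    have hlim : ∀ᵐ x ∂μ, ∀ᶠ n in atTop,
        (x ∈ proj n ⁻¹' Ad p n (k n) d₀ ↔ x ∈ (Set.univ : Set (ℕ → ℝ))) := by
      filter_upwards [hae] with x hx
      filter_upwards [hx.eventually (gt_mem_nhds hflt)] with n hn
      simp only [Set.mem_preimage, Ad, Set.mem_setOf_eq, Set.mem_univ, iff_true]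
      exact hn.le
    have hT := MeasureTheory.tendsto_measure_of_ae_tendsto_indicator_of_isFiniteMeasure
      atTop MeasurableSet.univ hmble hlim
    have h1 : Tendsto (fun n => (μ (proj n ⁻¹' Ad p n (k n) d₀)).toReal) atTop
        (𝓝 ((μ Set.univ).toReal)) :=
      (ENNReal.tendsto_toReal (measure_ne_top μ _)).comp hT
    simp only [measure_univ, ENNReal.toReal_one] at h1
    have hlaweq : (fun n => (lawn μ n (Ad p n (k n) d₀)).toReal)
        = fun n => (μ (proj n ⁻¹' Ad p n (k n) d₀)).toReal := by
      funext n; rw [hlaw n]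
    rw [hlaweq]
    exact h1
  · intro hlt
    have hfgt : d₀ < f r := by
      have hfge : d₀ ≤ f r := by rw [hd₀]; exact f_mono hp hchar hrIoc hr₀ hlt.le
      rcases hfge.lt_or_eq with h | h
      · exact h
      · exact absurd (huniq r hrIoc h.symm) (ne_of_lt hlt)
    have hlim : ∀ᵐ x ∂μ, ∀ᶠ n in atTop,
        (x ∈ proj n ⁻¹' Ad p n (k n) d₀ ↔ x ∈ (∅ : Set (ℕ → ℝ))) := by
      filter_upwards [hae] with x hx
      filter_upwards [hx.eventually (lt_mem_nhds hfgt)] with n hn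
      simp only [Set.mem_preimage, Ad, Set.mem_setOf_eq, Set.mem_empty_iff_false, iff_false,
        not_le]
      exact hn
    have hT := MeasureTheory.tendsto_measure_of_ae_tendsto_indicator_of_isFiniteMeasure
      atTop MeasurableSet.empty hmble hlim
    have h1 : Tendsto (fun n => (μ (proj n ⁻¹' Ad p n (k n) d₀)).toReal) atTop
        (𝓝 ((μ (∅ : Set (ℕ → ℝ))).toReal)) :=
      (ENNReal.tendsto_toReal (measure_ne_top μ _)).comp hT
    simp only [measure_empty, ENNReal.toReal_zero] at h1
    have hlaweq : (fun n => (lawn μ n (Ad p n (k n) d₀)).toReal)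
        = fun n => (μ (proj n ⁻¹' Ad p n (k n) d₀)).toReal := by
      funext n; rw [hlaw n]
    rw [hlaweq]
    exact h1

end
end

section
/- Let μ be an AMS and ergodic probability measure on ℝ^ℕ with stationary mean μ̄ and one-dimensional marginal μ̄₁, and let p > 0. If ∫_ℝ |x|^p dμ̄₁(x) = ∞, then for every r ∈ (0,1] and every sequence of nonnegative integers (k_n) with k_n/n → r, σ̃_p(k_n, X^n) → 0 μ-almost surely, where X^n = (X_1,…,X_n) denotes the first n coordinates. -/
open MeasureTheory Filter Set
open scoped ENNReal Topology Classical

noncomputable section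

section AuxForMain

open Filter MeasureTheory

lemma shift_measurable : Measurable shift :=
  measurable_pi_lambda _ fun n => measurable_pi_apply (n + 1)

lemma shift_iterate_apply (i : ℕ) (x : ℕ → ℝ) (n : ℕ) : shift^[i] x n = x (n + i) := by
  induction i generalizing x n with
  | zero => rfl
  | succ i ih =>
    rw [Function.iterate_succ_apply, ih]
    exact congrArg x (by omega)

lemma limsup_le_limsup_of_sub (u v : ℕ → ℝ) (C : ℝ)
    (hu : ∀ n, |u n| ≤ C) (hv : ∀ n, |v n| ≤ C)
    (h : Tendsto (fun n => u n - v n) atTop (𝓝 0)) :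
    limsup u atTop ≤ limsup v atTop := by
  have hvb : IsBoundedUnder (· ≤ ·) atTop v :=
    isBoundedUnder_of ⟨C, fun n => (abs_le.1 (hv n)).2⟩
  have hvc : IsCoboundedUnder (· ≤ ·) atTop v :=
    isCoboundedUnder_le_of_eventually_le atTop (x := -C)
      (Eventually.of_forall fun n => (abs_le.1 (hv n)).1)
  have huc : IsCoboundedUnder (· ≤ ·) atTop u :=
    isCoboundedUnder_le_of_eventually_le atTop (x := -C)
      (Eventually.of_forall fun n => (abs_le.1 (hu n)).1)
  refine le_of_forall_pos_le_add fun δ hδ => ?_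
  have hev : ∀ᶠ n in atTop, u n ≤ v n + δ := by
    filter_upwards [h.eventually_lt_const hδ] with n hn
    linarith
  have h1 : limsup u atTop ≤ limsup (fun n => v n + δ) atTop := by
    refine limsup_le_limsup hev huc ?_
    exact isBoundedUnder_of ⟨C + δ, fun n => by linarith [(abs_le.1 (hv n)).2]⟩
  rwa [limsup_add_const atTop v δ hvb hvc] at h1

variable {α : Type*} [MeasurableSpace α]

lemma birkhoffSum_measurable {T : α → α} (hT : Measurable T) {f : α → ℝ} (hf : Measurable f)
    (n : ℕ) : Measurable (fun x => birkhoffSum T f n x) := by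
  simp only [birkhoffSum]
  exact Finset.measurable_sum _ fun i _ => hf.comp (hT.iterate i)

lemma birkhoff_upper (T : α → α) (hT : Measurable T) (ν : Measure α) [IsProbabilityMeasure ν]
    (hmap : ν.map T = ν)
    (herg : ∀ F : Set α, MeasurableSet F → T ⁻¹' F = F → ν F = 0 ∨ ν F = 1)
    (f : α → ℝ) (hf : Measurable f) (C : ℝ) (hC0 : 0 ≤ C)
    (h0 : ∀ x, 0 ≤ f x) (hfC : ∀ x, f x ≤ C) :
    ∃ G : Set α, MeasurableSet G ∧ T ⁻¹' G = G ∧ ν G = 1 ∧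
      ∀ x ∈ G, ∀ δ : ℝ, 0 < δ →
        ∀ᶠ n in atTop, birkhoffSum T f n x / n < (∫ y, f y ∂ν) + δ := by
  classical
  have hTi : ∀ i : ℕ, Measurable (T^[i]) := fun i => hT.iterate i
  have hmapi : ∀ i : ℕ, ν.map (T^[i]) = ν := by
    intro i
    induction i with
    | zero => simp
    | succ i ih =>
      rw [Function.iterate_succ', ← Measure.map_map hT (hTi i), ih, hmap]
  have hSmeas : ∀ n : ℕ, Measurable (fun x => birkhoffSum T f n x) :=
    birkhoffSum_measurable hT hf
  set avg : ℕ → α → ℝ := fun n x => birkhoffSum T f n x / n with havg_def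
  have havg_meas : ∀ n, Measurable (avg n) := fun n => (hSmeas n).div_const _
  have hS0 : ∀ (n : ℕ) (x : α), 0 ≤ birkhoffSum T f n x := fun n x =>
    Finset.sum_nonneg fun i _ => h0 _
  have hSC : ∀ (n : ℕ) (x : α), birkhoffSum T f n x ≤ n * C := by
    intro n x
    calc birkhoffSum T f n x ≤ ∑ _i ∈ Finset.range n, C :=
          Finset.sum_le_sum fun i _ => hfC _
    _ = n * C := by simp [Finset.sum_const, nsmul_eq_mul]
  have havg0 : ∀ n x, 0 ≤ avg n x := fun n x => div_nonneg (hS0 n x) (Nat.cast_nonneg n)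
  have havgC : ∀ n x, avg n x ≤ C := by
    intro n x
    rcases Nat.eq_zero_or_pos n with hn | hn
    · simp [havg_def, hn, hC0]
    · have hnpos : (0:ℝ) < n := by exact_mod_cast hn
      rw [havg_def, div_le_iff₀ hnpos]
      calc birkhoffSum T f n x ≤ n * C := hSC n x
      _ = C * n := by ring
  have habs : ∀ n x, |avg n x| ≤ C := fun n x => abs_le.2 ⟨by linarith [havg0 n x], havgC n x⟩
  set L : α → ℝ := fun x => limsup (fun n => avg n x) atTop with hL_def
  have hLmeas : Measurable L := Measurable.limsup fun n => havg_meas n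
  have hLinv : ∀ x, L (T x) = L x := by
    intro x
    have hrel : ∀ n : ℕ, birkhoffSum T f n (T x) = birkhoffSum T f (n + 1) x - f x := by
      intro n
      rw [birkhoffSum_succ']
      ring
    have hdiff : Tendsto (fun n => avg n (T x) - avg (n + 1) x) atTop (𝓝 0) := by
      apply squeeze_zero_norm' (a := fun n : ℕ => (2 * C) / n)
      · filter_upwards [eventually_ge_atTop 1] with n hn
        have hnpos : (0:ℝ) < n := by exact_mod_cast hn
        have hn1pos : (0:ℝ) < (n : ℝ) + 1 := by positivity
        have hs0 : 0 ≤ birkhoffSum T f (n + 1) x := hS0 _ _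
        have hsC : birkhoffSum T f (n + 1) x ≤ ((n : ℝ) + 1) * C := by
          have := hSC (n + 1) x
          push_cast at this ⊢
          linarith
        have hid : avg n (T x) - avg (n + 1) x
            = birkhoffSum T f (n + 1) x / ((n : ℝ) * ((n : ℝ) + 1)) - f x / n := by
          simp only [havg_def, hrel n]
          push_cast
          field_simp
          ring
        rw [hid, Real.norm_eq_abs]
        have h1 : birkhoffSum T f (n + 1) x / ((n : ℝ) * ((n : ℝ) + 1)) ≤ C / n := by
          rw [div_le_div_iff₀ (by positivity) hnpos]
          nlinarith
        have h2 : (0:ℝ) ≤ birkhoffSum T f (n + 1) x / ((n : ℝ) * ((n : ℝ) + 1)) := by positivity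
        have h3 : |f x| ≤ C := abs_le.2 ⟨by linarith [h0 x], hfC x⟩
        have h4 : |f x / (n:ℝ)| ≤ C / n := by
          rw [abs_div, abs_of_pos hnpos]
          gcongr
        obtain ⟨h4a, h4b⟩ := abs_le.1 h4
        have h5 : 2 * C / (n:ℝ) = C / n + C / n := by ring
        rw [abs_le]
        constructor <;> [linarith; linarith]
      · exact tendsto_const_div_atTop_nhds_zero_nat (2 * C)
    have hshift : limsup (fun n => avg (n + 1) x) atTop = L x := by
      simpa using limsup_nat_add (fun n => avg n x) 1
    have hub : ∀ n, |avg (n+1) x| ≤ C := fun n => habs _ _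
    apply le_antisymm
    · calc L (T x) ≤ limsup (fun n => avg (n + 1) x) atTop :=
            limsup_le_limsup_of_sub _ _ C (fun n => habs n (T x)) hub hdiff
      _ = L x := hshift
    · calc L x = limsup (fun n => avg (n + 1) x) atTop := hshift.symm
      _ ≤ L (T x) := by
          refine limsup_le_limsup_of_sub _ _ C hub (fun n => habs n (T x)) ?_
          have := hdiff.neg
          simp only [neg_sub, neg_zero] at this
          exact this
  have hint_f : Integrable f ν :=
    ⟨hf.aestronglyMeasurable, HasFiniteIntegral.of_bounded (C := C)
      (Eventually.of_forall fun x => by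
        rw [Real.norm_eq_abs]; exact abs_le.2 ⟨by linarith [h0 x], hfC x⟩)⟩
  set I : ℝ := ∫ y, f y ∂ν with hI_def
  have hI0 : 0 ≤ I := integral_nonneg h0
  -- the key null set statement
  have key : ∀ δ : ℝ, 0 < δ → ν {x | I + δ < L x} = 0 := by
    intro δ hδ
    set a : ℝ := I + δ with ha_def
    have ha0 : 0 < a := by linarith
    set E : Set α := {x | a < L x} with hE_def
    have hEmeas : MeasurableSet E := measurableSet_lt measurable_const hLmeas
    have hEinv : T ⁻¹' E = E := by
      ext x
      simp only [hE_def, Set.mem_preimage, Set.mem_setOf_eq, hLinv x]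
    rcases herg E hEmeas hEinv with h0' | h1'
    · exact h0'
    exfalso
    -- a.e. stopping
    have hstop : ∀ x ∈ E, ∃ n, 1 ≤ n ∧ a * n < birkhoffSum T f n x := by
      intro x hx
      have hcb : IsCoboundedUnder (· ≤ ·) atTop (fun n => avg n x) :=
        isCoboundedUnder_le_of_eventually_le atTop (x := 0)
          (Eventually.of_forall fun n => havg0 n x)
      have hfreq : ∃ᶠ n in atTop, a < avg n x := frequently_lt_of_lt_limsup hcb hx
      obtain ⟨n, hn1, hna⟩ := (hfreq.and_eventually (eventually_ge_atTop 1)).exists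
      refine ⟨n, hna, ?_⟩
      have hnpos : (0:ℝ) < n := by exact_mod_cast hna
      have := (lt_div_iff₀ hnpos).1 hn1
      linarith
    set B : ℕ → Set α := fun N => ⋂ n ∈ Set.Icc 1 N, {x | birkhoffSum T f n x ≤ a * n}
      with hB_def
    have hBmeas : ∀ N, MeasurableSet (B N) := fun N =>
      MeasurableSet.biInter (Set.to_countable _) fun n _ =>
        measurableSet_le (hSmeas n) measurable_const
    have hBanti : Antitone B := by
      intro N N' hNN' x hx
      simp only [hB_def, Set.mem_iInter] at hx ⊢
      intro n hn
      exact hx n ⟨hn.1, hn.2.trans hNN'⟩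
    have hsubE : (⋂ N, B N) ⊆ Eᶜ := by
      intro x hx
      intro hxE
      obtain ⟨n, hn1, hna⟩ := hstop x hxE
      have hxB := Set.mem_iInter.1 hx n
      simp only [hB_def, Set.mem_iInter] at hxB
      exact absurd (hxB n ⟨hn1, le_rfl⟩) (not_le.2 hna)
    have hEc : ν Eᶜ = 0 := by
      rw [prob_compl_eq_one_sub hEmeas, h1', tsub_self]
    have hInter0 : ν (⋂ N, B N) = 0 :=
      le_antisymm (le_trans (measure_mono hsubE) hEc.le) zero_le
    have htendB : Tendsto (fun N => ν (B N)) atTop (𝓝 0) := by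
      have := tendsto_measure_iInter_atTop (μ := ν)
        (fun N => (hBmeas N).nullMeasurableSet) hBanti ⟨0, measure_ne_top _ _⟩
      rwa [hInter0] at this
    set η : ℝ := δ / (2 * (a + 1)) with hη_def
    have hηpos : 0 < η := by positivity
    obtain ⟨N, hNη, hN1⟩ :=
      ((htendB.eventually_lt_const (ENNReal.ofReal_pos.2 hηpos)).and
        (eventually_ge_atTop 1)).exists
    have hBη : (ν (B N)).toReal ≤ η :=
      ENNReal.toReal_le_of_le_ofReal hηpos.le hNη.le
    set C' : ℝ := max C a with hC'_def
    set g : α → ℝ := (B N).piecewise (fun x => max (f x) a) f with hg_def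
    have hg_meas : Measurable g :=
      Measurable.piecewise (hBmeas N) (hf.max measurable_const) hf
    have hfg : ∀ x, f x ≤ g x := by
      intro x
      by_cases hx : x ∈ B N <;> simp [hg_def, Set.piecewise, hx, le_max_left]
    have hg0 : ∀ x, 0 ≤ g x := fun x => le_trans (h0 x) (hfg x)
    have hgC' : ∀ x, g x ≤ C' := by
      intro x
      by_cases hx : x ∈ B N
      · simp only [hg_def, Set.piecewise, if_pos hx, hC'_def]
        exact max_le_max (hfC x) le_rfl
      · simp only [hg_def, Set.piecewise, if_neg hx, hC'_def]
        exact le_max_of_le_left (hfC x)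
    have hgfa : ∀ x, g x ≤ f x + (B N).indicator (fun _ => a) x := by
      intro x
      by_cases hx : x ∈ B N
      · simp only [hg_def, Set.piecewise, if_pos hx, Set.indicator_of_mem hx]
        exact max_le (by linarith [h0 x]) (by linarith [h0 x])
      · simp [hg_def, Set.piecewise, hx, Set.indicator_of_notMem hx]
    set τ : α → ℕ := fun x =>
      if x ∈ B N then 1 else sInf {n | 1 ≤ n ∧ n ≤ N ∧ a * n < birkhoffSum T f n x}
      with hτ_def
    have hτprop : ∀ x, (1 ≤ τ x ∧ τ x ≤ N) ∧ a * τ x ≤ birkhoffSum T g (τ x) x := by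
      intro x
      by_cases hx : x ∈ B N
      · have hτx : τ x = 1 := by simp only [hτ_def, if_pos hx]
        rw [hτx]
        refine ⟨⟨le_rfl, hN1⟩, ?_⟩
        rw [birkhoffSum_one]
        simp only [hg_def, Set.piecewise, if_pos hx, Nat.cast_one, mul_one]
        exact le_max_right (f x) a
      · have hne : {n | 1 ≤ n ∧ n ≤ N ∧ a * n < birkhoffSum T f n x}.Nonempty := by
          have hx' := hx
          simp only [hB_def, Set.mem_iInter, Set.mem_setOf_eq, not_forall] at hx'
          obtain ⟨n, hn, hlt⟩ := hx'
          exact ⟨n, hn.1, hn.2, not_le.1 hlt⟩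
        have hmem := Nat.sInf_mem hne
        obtain ⟨hm1, hm2, hm3⟩ := hmem
        have hτx : τ x = sInf {n | 1 ≤ n ∧ n ≤ N ∧ a * n < birkhoffSum T f n x} := by
          simp only [hτ_def, if_neg hx]
        refine ⟨⟨?_, ?_⟩, ?_⟩ <;> rw [hτx]
        · exact hm1
        · exact hm2
        · refine le_trans hm3.le ?_
          exact Finset.sum_le_sum fun i _ => hfg _
    set K : ℝ := N * (a + C') with hK_def
    have hC'0 : 0 ≤ C' := le_trans hC0 (le_max_left _ _)
    have claim : ∀ M : ℕ, ∀ x, a * M - K ≤ birkhoffSum T g M x := by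
      intro M
      induction M using Nat.strong_induction_on with
      | _ M ih =>
        intro x
        by_cases hM : M ≤ N
        · have h1 : (0:ℝ) ≤ birkhoffSum T g M x := Finset.sum_nonneg fun i _ => hg0 _
          have hMN : (M:ℝ) ≤ N := by exact_mod_cast hM
          have hN0 : (0:ℝ) ≤ (N:ℝ) * C' := by positivity
          nlinarith
        · push_neg at hM
          obtain ⟨⟨ht1, htN⟩, hkey⟩ := hτprop x
          set t := τ x
          have htM : t ≤ M := le_trans htN hM.le
          have hsplit : birkhoffSum T g M x
              = birkhoffSum T g t x + birkhoffSum T g (M - t) (T^[t] x) := by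
            conv_lhs => rw [show M = t + (M - t) by omega]
            exact birkhoffSum_add T g t (M - t) x
          have hih := ih (M - t) (by omega) (T^[t] x)
          have hcast : ((M - t : ℕ) : ℝ) = (M : ℝ) - t := by
            push_cast [Nat.cast_sub htM]
            ring
          rw [hcast] at hih
          rw [hsplit]
          linarith
    have hint_g : Integrable g ν :=
      ⟨hg_meas.aestronglyMeasurable, HasFiniteIntegral.of_bounded (C := C')
        (Eventually.of_forall fun x => by
          rw [Real.norm_eq_abs]; exact abs_le.2 ⟨by linarith [hg0 x], hgC' x⟩)⟩
    have hint_gi : ∀ i : ℕ, Integrable (fun x => g (T^[i] x)) ν := by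
      intro i
      have h := (integrable_map_measure (μ := ν) (f := T^[i]) (g := g)
        (by rw [hmapi i]; exact hg_meas.aestronglyMeasurable) (hTi i).aemeasurable).1
        (by rwa [hmapi i])
      exact h
    have hint_S : ∀ M : ℕ, Integrable (fun x => birkhoffSum T g M x) ν := by
      intro M
      simp only [birkhoffSum]
      exact integrable_finset_sum _ fun i _ => hint_gi i
    have hSint : ∀ M : ℕ, ∫ x, birkhoffSum T g M x ∂ν = M * ∫ y, g y ∂ν := by
      intro M
      have h1 : ∫ x, birkhoffSum T g M x ∂ν
          = ∑ i ∈ Finset.range M, ∫ x, g (T^[i] x) ∂ν := by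
        simp only [birkhoffSum]
        exact integral_finset_sum _ fun i _ => hint_gi i
      have h2 : ∀ i : ℕ, ∫ x, g (T^[i] x) ∂ν = ∫ y, g y ∂ν := by
        intro i
        conv_rhs => rw [← hmapi i]
        rw [integral_map (hTi i).aemeasurable hg_meas.aestronglyMeasurable]
      rw [h1]
      simp only [h2, Finset.sum_const, Finset.card_range, nsmul_eq_mul]
    have hga : a ≤ ∫ y, g y ∂ν := by
      have hbound : ∀ᶠ M : ℕ in atTop, a - K / M ≤ ∫ y, g y ∂ν := by
        filter_upwards [eventually_ge_atTop 1] with M hM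
        have hMpos : (0:ℝ) < M := by exact_mod_cast hM
        have h1 : a * M - K ≤ M * ∫ y, g y ∂ν := by
          have hle := integral_mono (integrable_const (a * M - K)) (hint_S M) (claim M)
          rwa [integral_const, probReal_univ, one_smul, hSint M] at hle
        have h2 : (a * M - K) / M ≤ ∫ y, g y ∂ν := by
          rw [div_le_iff₀ hMpos]
          linarith [h1]
        rw [sub_div, mul_div_cancel_right₀ _ (ne_of_gt hMpos)] at h2
        linarith [h2]
      have hten : Tendsto (fun M : ℕ => a - K / M) atTop (𝓝 a) := by
        have := tendsto_const_nhds (x := a) (f := atTop (α := ℕ)) |>.sub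
          (tendsto_const_div_atTop_nhds_zero_nat K)
        simpa using this
      exact le_of_tendsto hten hbound
    have hgb : ∫ y, g y ∂ν ≤ I + a * η := by
      have hind : Integrable ((B N).indicator fun _ => a) ν :=
        (integrable_const a).indicator (hBmeas N)
      have hle : ∫ y, g y ∂ν ≤ ∫ y, (f y + (B N).indicator (fun _ => a) y) ∂ν :=
        integral_mono hint_g (hint_f.add hind) hgfa
      rw [integral_add hint_f hind, integral_indicator_const _ (hBmeas N),
        smul_eq_mul] at hle
      have : (ν (B N)).toReal * a ≤ η * a :=
        mul_le_mul_of_nonneg_right hBη ha0.le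
      calc ∫ y, g y ∂ν ≤ I + (ν (B N)).toReal * a := hle
      _ ≤ I + η * a := by linarith
      _ = I + a * η := by ring
    have hηa : a * η ≤ δ / 2 := by
      rw [hη_def]
      rw [← mul_div_assoc, div_le_div_iff₀ (by positivity) two_pos]
      nlinarith [hδ.le, ha0.le]
    have hfinal : a ≤ I + δ / 2 := le_trans (hga.trans hgb) (by linarith [hηa])
    rw [ha_def] at hfinal
    linarith
  -- assemble the good set
  refine ⟨{x | L x ≤ I}, hLmeas measurableSet_Iic, ?_, ?_, ?_⟩
  · ext x
    simp only [Set.mem_preimage, Set.mem_setOf_eq, hLinv x]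
  · have hsub : {x | L x ≤ I}ᶜ ⊆ ⋃ m : ℕ, {x | I + 1 / (m + 1) < L x} := by
      intro x hx
      simp only [Set.mem_compl_iff, Set.mem_setOf_eq, not_le] at hx
      obtain ⟨m, hm⟩ := exists_nat_one_div_lt (show 0 < L x - I by linarith)
      exact Set.mem_iUnion.2 ⟨m, by
        simp only [Set.mem_setOf_eq]
        push_cast at hm ⊢
        linarith⟩
    have hc0 : ν {x | L x ≤ I}ᶜ = 0 :=
      measure_mono_null hsub (measure_iUnion_null fun m => key (1 / (m + 1)) (by positivity))
    exact (prob_compl_eq_zero_iff (hLmeas measurableSet_Iic)).1 hc0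
  · intro x hx δ hδ
    have hlt : L x < I + δ := lt_of_le_of_lt hx (by linarith)
    have := eventually_lt_of_limsup_lt hlt
      (isBoundedUnder_of ⟨C, fun n => havgC n x⟩)
    exact this

lemma birkhoff_bounded (T : α → α) (hT : Measurable T) (ν : Measure α) [IsProbabilityMeasure ν]
    (hmap : ν.map T = ν)
    (herg : ∀ F : Set α, MeasurableSet F → T ⁻¹' F = F → ν F = 0 ∨ ν F = 1)
    (f : α → ℝ) (hf : Measurable f) (C : ℝ) (hC0 : 0 ≤ C)
    (h0 : ∀ x, 0 ≤ f x) (hfC : ∀ x, f x ≤ C) :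
    ∃ G : Set α, MeasurableSet G ∧ T ⁻¹' G = G ∧ ν G = 1 ∧
      ∀ x ∈ G, Tendsto (fun n => birkhoffSum T f n x / n) atTop (𝓝 (∫ y, f y ∂ν)) := by
  obtain ⟨G₁, hG1m, hG1i, hG1f, hG1⟩ :=
    birkhoff_upper T hT ν hmap herg f hf C hC0 h0 hfC
  obtain ⟨G₂, hG2m, hG2i, hG2f, hG2⟩ :=
    birkhoff_upper T hT ν hmap herg (fun x => C - f x) (measurable_const.sub hf) C hC0
      (fun x => sub_nonneg.2 (hfC x)) (fun x => sub_le_self C (h0 x))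
  have hint_f : Integrable f ν :=
    ⟨hf.aestronglyMeasurable, HasFiniteIntegral.of_bounded (C := C)
      (Eventually.of_forall fun x => by
        rw [Real.norm_eq_abs]; exact abs_le.2 ⟨by linarith [h0 x], hfC x⟩)⟩
  have hIC : (∫ y, (C - f y) ∂ν) = C - ∫ y, f y ∂ν := by
    rw [integral_sub (integrable_const C) hint_f, integral_const, probReal_univ,
      one_smul]
  refine ⟨G₁ ∩ G₂, hG1m.inter hG2m, ?_, ?_, ?_⟩
  · rw [Set.preimage_inter, hG1i, hG2i]
  · have h1 : ν G₁ᶜ = 0 := by rw [prob_compl_eq_one_sub hG1m, hG1f, tsub_self]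
    have h2 : ν G₂ᶜ = 0 := by rw [prob_compl_eq_one_sub hG2m, hG2f, tsub_self]
    have : ν (G₁ ∩ G₂)ᶜ = 0 := by
      rw [Set.compl_inter]
      exact measure_union_null h1 h2
    exact (prob_compl_eq_zero_iff (hG1m.inter hG2m)).1 this
  · rintro x ⟨hx1, hx2⟩
    refine tendsto_order.2 ⟨fun b hb => ?_, fun b hb => ?_⟩
    · have hδ : (0:ℝ) < (∫ y, f y ∂ν) - b := by linarith
      have := hG2 x hx2 _ hδ
      rw [hIC] at this
      filter_upwards [this, eventually_ge_atTop 1] with n h1' hn1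
      have hnpos : (0:ℝ) < n := by exact_mod_cast hn1
      have hsum : birkhoffSum T (fun y => C - f y) n x = n * C - birkhoffSum T f n x := by
        simp only [birkhoffSum, Finset.sum_sub_distrib, Finset.sum_const, Finset.card_range,
          nsmul_eq_mul]
      rw [hsum] at h1'
      have hdiv : ((n:ℝ) * C - birkhoffSum T f n x) / n = C - birkhoffSum T f n x / n := by
        field_simp
      rw [hdiv] at h1'
      linarith
    · have hδ : (0:ℝ) < b - ∫ y, f y ∂ν := by linarith
      filter_upwards [hG1 x hx1 _ hδ] with n h1'
      linarith

end AuxForMain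


section AuxAMS

open Filter MeasureTheory

lemma cesaro_shifted (a : ℕ → ℝ) (ha : ∀ n, |a n| ≤ 1) (l : ℝ)
    (h : Tendsto (fun n => (∑ i ∈ Finset.range n, a i) / n) atTop (𝓝 l)) :
    Tendsto (fun n => (∑ i ∈ Finset.range n, a (i + 1)) / n) atTop (𝓝 l) := by
  have hEq : ∀ n : ℕ, (∑ i ∈ Finset.range n, a (i + 1)) / n
      = (∑ i ∈ Finset.range n, a i) / n + (a n - a 0) / n := by
    intro n
    have h3 : (∑ i ∈ Finset.range n, a (i + 1)) - ∑ i ∈ Finset.range n, a i = a n - a 0 := by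
      rw [← Finset.sum_sub_distrib]
      exact Finset.sum_range_sub a n
    have h4 : (∑ i ∈ Finset.range n, a (i + 1))
        = (∑ i ∈ Finset.range n, a i) + (a n - a 0) := by linarith
    rw [h4, add_div]
  have htail : Tendsto (fun n : ℕ => (a n - a 0) / n) atTop (𝓝 0) := by
    apply squeeze_zero_norm' (a := fun n : ℕ => 2 / n)
    · filter_upwards [eventually_ge_atTop 1] with n hn
      have hnpos : (0:ℝ) < n := by exact_mod_cast hn
      rw [Real.norm_eq_abs, abs_div, abs_of_pos hnpos]
      have h5 : |a n - a 0| ≤ 2 := by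
        have := ha n
        have := ha 0
        have h6 := abs_sub (a n) (a 0)
        linarith
      gcongr
    · exact tendsto_const_div_atTop_nhds_zero_nat 2
  have := h.add htail
  rw [add_zero] at this
  exact this.congr fun n => (hEq n).symm

lemma measure_toReal_le_one {μ : Measure (ℕ → ℝ)} [IsProbabilityMeasure μ] (s : Set (ℕ → ℝ)) :
    (μ s).toReal ≤ 1 := by
  have h := prob_le_one (μ := μ) (s := s)
  have := ENNReal.toReal_mono (by simp) h
  simpa using this

lemma abs_measure_toReal_le_one {μ : Measure (ℕ → ℝ)} [IsProbabilityMeasure μ]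
    (s : Set (ℕ → ℝ)) : |(μ s).toReal| ≤ 1 := by
  rw [abs_of_nonneg ENNReal.toReal_nonneg]
  exact measure_toReal_le_one s

lemma shift_iterate_preimage_invariant {G : Set (ℕ → ℝ)} (hinv : shift ⁻¹' G = G) :
    ∀ i : ℕ, shift^[i] ⁻¹' G = G := by
  intro i
  induction i with
  | zero => rfl
  | succ i ih =>
    rw [Function.iterate_succ, Set.preimage_comp, ih, hinv]

lemma invariant_measure_eq {μ ν : Measure (ℕ → ℝ)} [IsProbabilityMeasure μ]
    [IsProbabilityMeasure ν] (hAMS : HasStationaryMean μ ν)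
    (G : Set (ℕ → ℝ)) (hG : MeasurableSet G) (hinv : shift ⁻¹' G = G) :
    μ G = ν G := by
  have hit := shift_iterate_preimage_invariant hinv
  have h := hAMS G hG
  have hconst : Tendsto
      (fun n : ℕ => (∑ i ∈ Finset.range n, (μ (shift^[i] ⁻¹' G)).toReal) / n)
      atTop (𝓝 (μ G).toReal) := by
    apply Tendsto.congr' _ (tendsto_const_nhds (x := (μ G).toReal))
    filter_upwards [eventually_ge_atTop 1] with n hn
    have hnpos : (0:ℝ) < n := by exact_mod_cast hn
    simp only [hit, Finset.sum_const, Finset.card_range, nsmul_eq_mul]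
    field_simp
  have heq := tendsto_nhds_unique hconst h
  exact (ENNReal.toReal_eq_toReal_iff' (measure_ne_top _ _) (measure_ne_top _ _)).1 heq

lemma nu_map_shift {μ ν : Measure (ℕ → ℝ)} [IsProbabilityMeasure μ]
    [IsProbabilityMeasure ν] (hAMS : HasStationaryMean μ ν) :
    ν.map shift = ν := by
  refine Measure.ext fun F hF => ?_
  rw [Measure.map_apply shift_measurable hF]
  have h1 := hAMS F hF
  have h2 := hAMS (shift ⁻¹' F) (shift_measurable hF)
  have hEq : ∀ i : ℕ, shift^[i] ⁻¹' (shift ⁻¹' F) = shift^[i + 1] ⁻¹' F := by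
    intro i
    rw [Function.iterate_succ', Set.preimage_comp]
  have h2' : Tendsto
      (fun n : ℕ => (∑ i ∈ Finset.range n, (μ (shift^[i + 1] ⁻¹' F)).toReal) / n)
      atTop (𝓝 (ν (shift ⁻¹' F)).toReal) := by
    refine h2.congr fun n => ?_
    congr 1
    exact Finset.sum_congr rfl fun i _ => by rw [hEq i]
  have h1' := cesaro_shifted (fun i => (μ (shift^[i] ⁻¹' F)).toReal)
    (fun i => abs_measure_toReal_le_one _) _ h1
  have heq := tendsto_nhds_unique h2' h1'
  exact (ENNReal.toReal_eq_toReal_iff' (measure_ne_top _ _) (measure_ne_top _ _)).1 heq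

end AuxAMS


/-- Theorem 1, part (i): for an AMS ergodic process whose stationary mean has infinite
`p`-th marginal moment, the relative approximation error tends to `0` almost surely at
every rate `r ∈ (0,1]`. -/
theorem ams_ergodic_infinite_moment_zero_error
    (p : ℝ) (hp : 0 < p) (μ ν : Measure (ℕ → ℝ))
    [IsProbabilityMeasure μ] [IsProbabilityMeasure ν]
    (hAMS : HasStationaryMean μ ν) (herg : IsErgodicShift μ)
    (hmom : momentP p (marginal1 ν) = ∞) :
    ∀ r ∈ Set.Ioc (0:ℝ) 1, ∀ k : ℕ → ℕ,
      Tendsto (fun n : ℕ => (k n : ℝ) / n) atTop (𝓝 r) →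
      ∀ᵐ x ∂μ, Tendsto (fun n : ℕ => sigmaTilde p n (k n) (proj n x)) atTop (𝓝 0) := by
  classical
  intro r hr k hk
  obtain ⟨hr0, hr1⟩ := hr
  have hmapν : ν.map shift = ν := nu_map_shift hAMS
  have hergν : ∀ F : Set (ℕ → ℝ), MeasurableSet F → shift ⁻¹' F = F → ν F = 0 ∨ ν F = 1 := by
    intro F hF hFi
    rw [← invariant_measure_eq hAMS F hF hFi]
    exact herg F hF hFi
  have htransfer : ∀ G : Set (ℕ → ℝ), MeasurableSet G → shift ⁻¹' G = G → ν G = 1 →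
      ∀ᵐ x ∂μ, x ∈ G := by
    intro G hG hGi hG1
    have hμG : μ G = 1 := by rw [invariant_measure_eq hAMS G hG hGi, hG1]
    have h0' : μ Gᶜ = 0 := by rw [prob_compl_eq_one_sub hG, hμG, tsub_self]
    rw [Filter.eventually_iff, mem_ae_iff]
    simpa using h0'
  set sj : ℕ → Set (ℕ → ℝ) := fun j => {y | (j : ℝ) ≤ |y 0|} with hsj_def
  have hsj_meas : ∀ j, MeasurableSet (sj j) := fun j =>
    measurableSet_le measurable_const ((measurable_pi_apply 0).abs)
  set fj : ℕ → (ℕ → ℝ) → ℝ := fun j => (sj j).indicator (fun _ => 1) with hfj_def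
  have hfj_meas : ∀ j, Measurable (fj j) := fun j =>
    (measurable_const (a := (1:ℝ))).indicator (hsj_meas j)
  have hfj_int : ∀ j, ∫ y, fj j y ∂ν = (ν (sj j)).toReal := by
    intro j
    simp only [hfj_def]
    rw [integral_indicator_const (1:ℝ) (hsj_meas j), smul_eq_mul, mul_one]
    rfl
  have hfj0 : ∀ j y, 0 ≤ fj j y := fun j y =>
    Set.indicator_nonneg (fun _ _ => zero_le_one) y
  have hfj1 : ∀ j y, fj j y ≤ 1 := by
    intro j y
    by_cases h : y ∈ sj j <;> simp [hfj_def, Set.indicator, h]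
  set gM : ℕ → (ℕ → ℝ) → ℝ := fun M y => min (|y 0| ^ p) M with hgM_def
  have habs0 : Measurable fun y : ℕ → ℝ => |y 0| ^ p :=
    ((Real.continuous_rpow_const hp.le).measurable).comp ((measurable_pi_apply 0).abs)
  have hgM_meas : ∀ M, Measurable (gM M) := fun M => habs0.min measurable_const
  have hgM0 : ∀ (M : ℕ) (y : ℕ → ℝ), 0 ≤ gM M y := fun M y =>
    le_min (Real.rpow_nonneg (abs_nonneg _) p) (Nat.cast_nonneg M)
  have hgMC : ∀ (M : ℕ) (y : ℕ → ℝ), gM M y ≤ (M : ℝ) := fun M y => min_le_right _ _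
  set cM : ℕ → ℝ := fun M => ∫ y, gM M y ∂ν with hcM_def
  have hφ : ∃ j : ℕ, 1 ≤ j ∧ (ν (sj j)).toReal < r / 2 := by
    have hanti : Antitone sj := by
      intro j j' hjj' y hy
      simp only [hsj_def, Set.mem_setOf_eq] at hy ⊢
      have hcast : (j : ℝ) ≤ (j' : ℝ) := by exact_mod_cast hjj'
      linarith
    have hiInter : (⋂ j : ℕ, sj j) = ∅ := by
      ext y
      simp only [Set.mem_iInter, Set.mem_empty_iff_false, iff_false, not_forall]
      obtain ⟨m, hm⟩ := exists_nat_gt |y 0|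
      refine ⟨m, ?_⟩
      simp only [hsj_def, Set.mem_setOf_eq, not_le]
      exact hm
    have ht := tendsto_measure_iInter_atTop (μ := ν)
      (fun j => (hsj_meas j).nullMeasurableSet) hanti ⟨0, measure_ne_top _ _⟩
    rw [hiInter, measure_empty] at ht
    have ht2 : Tendsto (fun j => (ν (sj j)).toReal) atTop (𝓝 0) := by
      have := (ENNReal.tendsto_toReal (by simp)).comp ht
      simpa [Function.comp_def] using this
    obtain ⟨j, hj⟩ := ((ht2.eventually_lt_const (by linarith : (0:ℝ) < r / 2)).and
      (eventually_ge_atTop 1)).exists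
    exact ⟨j, hj.2, hj.1⟩
  have hcMbig : ∀ K : ℝ, ∃ M : ℕ, K ≤ cM M := by
    intro K
    have hmeasE : ∀ M : ℕ, Measurable fun y => ENNReal.ofReal (gM M y) := fun M =>
      (hgM_meas M).ennreal_ofReal
    have hmono : Monotone fun (M : ℕ) (y : ℕ → ℝ) => ENNReal.ofReal (gM M y) := by
      intro M M' hMM' y
      apply ENNReal.ofReal_le_ofReal
      exact min_le_min le_rfl (by exact_mod_cast hMM')
    have hsup : ∀ y, (⨆ M : ℕ, ENNReal.ofReal (gM M y)) = ENNReal.ofReal (|y 0| ^ p) := by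
      intro y
      apply le_antisymm
      · exact iSup_le fun M => ENNReal.ofReal_le_ofReal (min_le_left _ _)
      · refine le_iSup_of_le ⌈|y 0| ^ p⌉₊ ?_
        apply le_of_eq
        congr 1
        exact (min_eq_left (Nat.le_ceil _)).symm
    have hlim : (⨆ M : ℕ, ∫⁻ y, ENNReal.ofReal (gM M y) ∂ν) = ⊤ := by
      rw [← lintegral_iSup hmeasE hmono]
      have hcongr : ∫⁻ y, (⨆ M : ℕ, ENNReal.ofReal (gM M y)) ∂ν
          = ∫⁻ y, ENNReal.ofReal (|y 0| ^ p) ∂ν := lintegral_congr hsup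
      rw [hcongr]
      have hmm : momentP p (marginal1 ν) = ∫⁻ y, ENNReal.ofReal (|y 0| ^ p) ∂ν := by
        simp only [momentP, marginal1]
        rw [lintegral_map (f := fun t : ℝ => ENNReal.ofReal (|t| ^ p))
          (g := fun y : ℕ → ℝ => y 0)
          ((((Real.continuous_rpow_const hp.le).measurable).comp
            measurable_abs).ennreal_ofReal) (measurable_pi_apply 0)]
      rw [← hmm, hmom]
    have hlt : ENNReal.ofReal K < ⨆ M : ℕ, ∫⁻ y, ENNReal.ofReal (gM M y) ∂ν := by
      rw [hlim]; exact ENNReal.ofReal_lt_top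
    obtain ⟨M, hM⟩ := lt_iSup_iff.1 hlt
    refine ⟨M, ?_⟩
    have hfin : ∫⁻ y, ENNReal.ofReal (gM M y) ∂ν ≠ ⊤ := by
      apply ne_of_lt
      calc ∫⁻ y, ENNReal.ofReal (gM M y) ∂ν ≤ ∫⁻ _y, ENNReal.ofReal (M : ℝ) ∂ν :=
            lintegral_mono fun y => ENNReal.ofReal_le_ofReal (hgMC M y)
      _ = ENNReal.ofReal (M : ℝ) := by rw [lintegral_const, measure_univ, mul_one]
      _ < ⊤ := ENNReal.ofReal_lt_top
    have hCeq : cM M = (∫⁻ y, ENNReal.ofReal (gM M y) ∂ν).toReal := by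
      simp only [hcM_def]
      exact integral_eq_lintegral_of_nonneg_ae (Eventually.of_forall (hgM0 M))
        (hgM_meas M).aestronglyMeasurable
    rw [hCeq]
    rcases le_or_gt K 0 with hK | hK
    · exact hK.trans ENNReal.toReal_nonneg
    · have hmono2 := (ENNReal.toReal_le_toReal (by simp) hfin).2 hM.le
      rwa [ENNReal.toReal_ofReal hK.le] at hmono2
  have hB1 : ∀ j : ℕ, ∀ᵐ x ∂μ, Tendsto (fun n => birkhoffSum shift (fj j) n x / n)
      atTop (𝓝 ((ν (sj j)).toReal)) := by
    intro j
    obtain ⟨G, hGm, hGi, hG1, hGc⟩ :=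
      birkhoff_bounded shift shift_measurable ν hmapν hergν (fj j) (hfj_meas j) 1
        zero_le_one (hfj0 j) (hfj1 j)
    filter_upwards [htransfer G hGm hGi hG1] with x hx
    have hcv := hGc x hx
    rwa [hfj_int j] at hcv
  have hB2 : ∀ M : ℕ, ∀ᵐ x ∂μ, Tendsto (fun n => birkhoffSum shift (gM M) n x / n)
      atTop (𝓝 (cM M)) := by
    intro M
    obtain ⟨G, hGm, hGi, hG1, hGc⟩ :=
      birkhoff_bounded shift shift_measurable ν hmapν hergν (gM M) (hgM_meas M) M
        (Nat.cast_nonneg M) (hgM0 M) (hgMC M)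
    filter_upwards [htransfer G hGm hGi hG1] with x hx
    exact hGc x hx
  filter_upwards [ae_all_iff.2 hB1, ae_all_iff.2 hB2] with x hx1 hx2
  have hsum1 : ∀ (j n : ℕ), birkhoffSum shift (fj j) n x
      = ∑ i ∈ Finset.range n, (if (j : ℝ) ≤ |x i| then (1:ℝ) else 0) := by
    intro j n
    unfold birkhoffSum
    refine Finset.sum_congr rfl fun i _ => ?_
    simp only [hfj_def, Set.indicator, hsj_def, Set.mem_setOf_eq, shift_iterate_apply,
      zero_add]
  have hsum2 : ∀ (M n : ℕ), birkhoffSum shift (gM M) n x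
      = ∑ i ∈ Finset.range n, min (|x i| ^ p) (M : ℝ) := by
    intro M n
    unfold birkhoffSum
    refine Finset.sum_congr rfl fun i _ => ?_
    simp only [hgM_def, shift_iterate_apply, zero_add]
  have hsigP_nonneg : ∀ (n kk : ℕ) (y : Fin n → ℝ), 0 ≤ sigmaP p n kk y := by
    intro n kk y
    apply Real.sInf_nonneg
    rintro e ⟨S, hS, rfl⟩
    exact Real.rpow_nonneg
      (Finset.sum_nonneg fun i _ => Real.rpow_nonneg (abs_nonneg _) p) _
  have hsig_nonneg : ∀ (n kk : ℕ) (y : Fin n → ℝ), 0 ≤ sigmaTilde p n kk y := by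
    intro n kk y
    exact div_nonneg (hsigP_nonneg n kk y)
      (Real.rpow_nonneg (Finset.sum_nonneg fun i _ => Real.rpow_nonneg (abs_nonneg _) p) _)
  rw [Metric.tendsto_atTop]
  intro ε hε
  obtain ⟨j, hj1, hjφ⟩ := hφ
  have hjpos : (0:ℝ) < j := by exact_mod_cast hj1
  have hε2 : (0:ℝ) < ε / 2 := by linarith
  obtain ⟨M, hM⟩ := hcMbig ((j : ℝ) ^ p / (ε / 2) ^ p + 1)
  have hjp_pos : (0:ℝ) < (j : ℝ) ^ p := Real.rpow_pos_of_pos hjpos p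
  have hεp_pos : (0:ℝ) < (ε / 2) ^ p := Real.rpow_pos_of_pos hε2 p
  have hc1 : (j : ℝ) ^ p / (ε / 2) ^ p ≤ cM M - 1 := by linarith
  have hc0 : (0:ℝ) < cM M - 1 := lt_of_lt_of_le (div_pos hjp_pos hεp_pos) hc1
  have ha := (hx1 j).eventually_lt_const (show (ν (sj j)).toReal < 3 * r / 4 by linarith)
  have hb := hk.eventually_const_lt (show 3 * r / 4 < r by linarith)
  have hc := (hx2 M).eventually_const_lt (show cM M - 1 < cM M by linarith)
  have hfinal : ∀ᶠ n in atTop, dist (sigmaTilde p n (k n) (proj n x)) 0 < ε := by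
    filter_upwards [ha, hb, hc, eventually_ge_atTop 1] with n h1 h2 h3 hn1
    have hnpos : (0:ℝ) < n := by exact_mod_cast hn1
    rw [Real.dist_eq, sub_zero, abs_of_nonneg (hsig_nonneg _ _ _)]
    by_cases hkn : k n ≤ n
    · -- main case
      set H : Finset (Fin n) := Finset.univ.filter (fun i => (j : ℝ) ≤ |x i|) with hH_def
      have hHcard : (H.card : ℝ)
          = ∑ i ∈ Finset.range n, (if (j : ℝ) ≤ |x i| then (1:ℝ) else 0) := by
        rw [← Fin.sum_univ_eq_sum_range (fun i => if (j : ℝ) ≤ |x i| then (1:ℝ) else 0) n]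
        rw [Finset.sum_boole]
      have hcount : (∑ i ∈ Finset.range n, (if (j : ℝ) ≤ |x i| then (1:ℝ) else 0))
          < 3 * r / 4 * n := by
        have h1' := (div_lt_iff₀ hnpos).1 h1
        rwa [hsum1 j n] at h1'
      have hkn' : 3 * r / 4 * n < k n := (lt_div_iff₀ hnpos).1 h2
      have hHk : H.card ≤ k n := by
        have hlt : (H.card : ℝ) < (k n : ℝ) := by rw [hHcard]; linarith
        exact_mod_cast hlt.le
      obtain ⟨S, hHS, hScard⟩ := Finset.exists_superset_card_eq hHk
        (by rw [Fintype.card_fin]; exact hkn)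
      have hSc_card : ((Sᶜ : Finset (Fin n)).card : ℝ) ≤ (n : ℝ) := by
        have hcle : (Sᶜ : Finset (Fin n)).card ≤ n := by
          simpa using Finset.card_le_univ (Sᶜ : Finset (Fin n))
        exact_mod_cast hcle
      have hnum_sum : (∑ i ∈ Sᶜ, |proj n x i| ^ p) ≤ (n : ℝ) * (j : ℝ) ^ p := by
        calc (∑ i ∈ Sᶜ, |proj n x i| ^ p) ≤ ∑ _i ∈ Sᶜ, (j : ℝ) ^ p := by
              refine Finset.sum_le_sum fun i hi => ?_
              have hiS : i ∉ S := Finset.mem_compl.1 hi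
              have hiH : i ∉ H := fun hmem => hiS (hHS hmem)
              have hlt : ¬ ((j : ℝ) ≤ |x i|) := by
                intro hcon
                exact hiH (by simp [hH_def, hcon])
              have hxi : |x (i : ℕ)| ≤ (j : ℝ) := (not_le.1 hlt).le
              exact Real.rpow_le_rpow (abs_nonneg _) (by simpa [proj] using hxi) hp.le
        _ = (Sᶜ : Finset (Fin n)).card * (j : ℝ) ^ p := by
              rw [Finset.sum_const, nsmul_eq_mul]
        _ ≤ (n : ℝ) * (j : ℝ) ^ p := mul_le_mul_of_nonneg_right hSc_card hjp_pos.le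
      have hnum : sigmaP p n (k n) (proj n x) ≤ ((n : ℝ) * (j : ℝ) ^ p) ^ (1 / p) := by
        have hbdd : BddBelow {e : ℝ | ∃ S' : Finset (Fin n), S'.card = k n
            ∧ e = (∑ i ∈ S'ᶜ, |proj n x i| ^ p) ^ (1 / p)} := by
          refine ⟨0, ?_⟩
          rintro e ⟨S', hS', rfl⟩
          exact Real.rpow_nonneg (Finset.sum_nonneg fun i _ =>
            Real.rpow_nonneg (abs_nonneg _) p) _
        have hmem : (∑ i ∈ Sᶜ, |proj n x i| ^ p) ^ (1 / p) ∈ {e : ℝ | ∃ S' : Finset (Fin n),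
            S'.card = k n ∧ e = (∑ i ∈ S'ᶜ, |proj n x i| ^ p) ^ (1 / p)} := ⟨S, hScard, rfl⟩
        refine le_trans (csInf_le hbdd hmem) ?_
        exact Real.rpow_le_rpow (Finset.sum_nonneg fun i _ =>
          Real.rpow_nonneg (abs_nonneg _) p) hnum_sum (by positivity)
      have hden_sum : (cM M - 1) * n < ∑ i : Fin n, |proj n x i| ^ p := by
        have h3' := (lt_div_iff₀ hnpos).1 h3
        rw [hsum2 M n] at h3'
        have hle : (∑ i ∈ Finset.range n, min (|x i| ^ p) (M : ℝ))
            ≤ ∑ i ∈ Finset.range n, |x i| ^ p :=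
          Finset.sum_le_sum fun i _ => min_le_left _ _
        have heq : (∑ i : Fin n, |proj n x i| ^ p) = ∑ i ∈ Finset.range n, |x i| ^ p :=
          Fin.sum_univ_eq_sum_range (fun i => |x i| ^ p) n
        rw [heq]
        linarith
      have hden_pos : (0:ℝ) < (cM M - 1) * n := mul_pos hc0 hnpos
      have hden : ((cM M - 1) * n) ^ (1 / p) ≤ (∑ i : Fin n, |proj n x i| ^ p) ^ (1 / p) :=
        Real.rpow_le_rpow hden_pos.le hden_sum.le (by positivity)
      have hstep1 : sigmaTilde p n (k n) (proj n x)
          ≤ ((n : ℝ) * (j : ℝ) ^ p) ^ (1 / p) / (((cM M - 1) * n) ^ (1 / p)) := by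
        simp only [sigmaTilde]
        exact div_le_div₀ (Real.rpow_nonneg (by positivity) _) hnum
          (Real.rpow_pos_of_pos hden_pos _) hden
      have hstep2 : ((n : ℝ) * (j : ℝ) ^ p) ^ (1 / p) / (((cM M - 1) * n) ^ (1 / p))
          = ((n : ℝ) * (j : ℝ) ^ p / ((cM M - 1) * n)) ^ (1 / p) :=
        (Real.div_rpow (by positivity) (by positivity) _).symm
      have hstep3 : (n : ℝ) * (j : ℝ) ^ p / ((cM M - 1) * n) = (j : ℝ) ^ p / (cM M - 1) := by
        field_simp
      have hstep4 : (j : ℝ) ^ p / (cM M - 1) ≤ (ε / 2) ^ p := by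
        rw [div_le_iff₀ hc0]
        calc (j : ℝ) ^ p = (ε / 2) ^ p * ((j : ℝ) ^ p / (ε / 2) ^ p) := by field_simp
        _ ≤ (ε / 2) ^ p * (cM M - 1) := mul_le_mul_of_nonneg_left hc1 hεp_pos.le
      have hstep5 : ((j : ℝ) ^ p / (cM M - 1)) ^ (1 / p) ≤ ((ε / 2) ^ p) ^ (1 / p) :=
        Real.rpow_le_rpow (by positivity) hstep4 (by positivity)
      have hstep6 : ((ε / 2 : ℝ) ^ p) ^ (1 / p) = ε / 2 := by
        rw [← Real.rpow_mul hε2.le, mul_one_div_cancel (ne_of_gt hp), Real.rpow_one]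
      calc sigmaTilde p n (k n) (proj n x)
          ≤ ((n : ℝ) * (j : ℝ) ^ p) ^ (1 / p) / (((cM M - 1) * n) ^ (1 / p)) := hstep1
      _ = ((n : ℝ) * (j : ℝ) ^ p / ((cM M - 1) * n)) ^ (1 / p) := hstep2
      _ = ((j : ℝ) ^ p / (cM M - 1)) ^ (1 / p) := by rw [hstep3]
      _ ≤ ((ε / 2) ^ p) ^ (1 / p) := hstep5
      _ = ε / 2 := hstep6
      _ < ε := by linarith
    · -- k n > n : the approximation set is empty
      push_neg at hkn
      have hempty : {e : ℝ | ∃ S : Finset (Fin n), S.card = k n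
          ∧ e = (∑ i ∈ Sᶜ, |proj n x i| ^ p) ^ (1 / p)} = ∅ := by
        ext e
        simp only [Set.mem_setOf_eq, Set.mem_empty_iff_false, iff_false, not_exists]
        rintro S ⟨hS, -⟩
        have hcle : S.card ≤ n := by simpa using S.card_le_univ
        omega
      simp only [sigmaTilde, sigmaP]
      rw [hempty, Real.sInf_empty, zero_div]
      exact hε
  obtain ⟨N, hN⟩ := eventually_atTop.1 hfinal
  exact ⟨N, hN⟩


end
end

section
/- Let μ be an AMS and ergodic probability measure on ℝ^ℕ with stationary mean μ̄ and one-dimensional marginal μ̄₁, and let p > 0. Assume 0 < ∫_ℝ |x|^p dμ̄₁(x) < ∞ and that μ̄₁ is absolutely continuous with respect to Lebesgue measure. Then for every r ∈ (0,1] there exists τ(r) ≥ 0 with μ̄₁(B_{τ(r)}) = r, and for every such τ(r) and every sequence of nonnegative integers (k_n) with k_n/n → r, σ̃_p(k_n, X^n) → (1 − v_p(B_{τ(r)}))^{1/p} μ-almost surely. -/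
open MeasureTheory Filter Set
open scoped ENNReal Topology Classical

noncomputable section

set_option linter.unusedSectionVars false
set_option maxHeartbeats 1000000

namespace BirkhoffAux

variable {α : Type*} [MeasurableSpace α]

/-- Birkhoff sums. -/
def S (T : α → α) (f : α → ℝ) (n : ℕ) (x : α) : ℝ := ∑ i ∈ Finset.range n, f (T^[i] x)

/-- Running maxima of Birkhoff sums, `P T f N x = max_{0 ≤ n ≤ N} S T f n x`. -/
def P (T : α → α) (f : α → ℝ) : ℕ → α → ℝ
  | 0 => fun _ => 0
  | (N+1) => fun x => max (P T f N x) (S T f (N+1) x)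

variable {T : α → α} {f : α → ℝ}

lemma S_succ' (n : ℕ) (x : α) : S T f (n+1) x = S T f n (T x) + f x := by
  simp only [S, Finset.sum_range_succ']
  simp [Function.iterate_succ_apply]

lemma P_nonneg (N : ℕ) (x : α) : 0 ≤ P T f N x := by
  induction N with
  | zero => simp [P]
  | succ N ih => exact le_trans ih (le_max_left _ _)

lemma P_le_succ (N : ℕ) (x : α) : P T f N x ≤ P T f (N+1) x := le_max_left _ _

lemma P_mono {N M : ℕ} (h : N ≤ M) (x : α) : P T f N x ≤ P T f M x :=
  monotone_nat_of_le_succ (f := fun N => P T f N x) (fun N => P_le_succ N x) h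

lemma S_le_P {n N : ℕ} (h : n ≤ N) (x : α) : S T f n x ≤ P T f N x := by
  induction N with
  | zero => interval_cases n; simp [S, P]
  | succ N ih =>
    rcases Nat.le_succ_iff.1 h with h' | h'
    · exact le_trans (ih h') (P_le_succ N x)
    · subst h'; exact le_max_right _ _

lemma P_cases (N : ℕ) (x : α) :
    P T f N x = 0 ∨ ∃ n, 1 ≤ n ∧ n ≤ N ∧ P T f N x = S T f n x := by
  induction N with
  | zero => left; rfl
  | succ N ih =>
    rcases max_cases (P T f N x) (S T f (N+1) x) with ⟨h1, _⟩ | ⟨h1, _⟩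
    · rcases ih with h | ⟨n, hn1, hn2, hn3⟩
      · left; simp only [P]; rw [h1, h]
      · right; exact ⟨n, hn1, le_trans hn2 (Nat.le_succ N), by simp only [P]; rw [h1, hn3]⟩
    · right; exact ⟨N+1, Nat.succ_le_succ (Nat.zero_le N), le_refl _, by simp only [P]; rw [h1]⟩

lemma measurable_S (hT : Measurable T) (hf : Measurable f) (n : ℕ) : Measurable (S T f n) :=
  Finset.measurable_sum _ (fun i _ => hf.comp (hT.iterate i))

lemma measurable_P (hT : Measurable T) (hf : Measurable f) (N : ℕ) : Measurable (P T f N) := by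
  induction N with
  | zero => simpa [P] using measurable_const
  | succ N ih => exact ih.max (measurable_S hT hf (N+1))

variable {μ : Measure α} [IsProbabilityMeasure μ]

lemma integrable_S (hTm : MeasurePreserving T μ μ) (hfi : Integrable f μ) (n : ℕ) :
    Integrable (S T f n) μ := by
  refine integrable_finset_sum _ (fun i _ => ?_)
  exact ((hTm.iterate i).integrable_comp hfi.aestronglyMeasurable).2 hfi

lemma integrable_P (hTm : MeasurePreserving T μ μ) (hfi : Integrable f μ) (N : ℕ) :
    Integrable (P T f N) μ := by
  induction N with
  | zero => simpa [P] using integrable_const (0:ℝ)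
  | succ N ih =>
    have := ih.sup (integrable_S hTm hfi (N+1))
    refine this.congr (Eventually.of_forall fun x => ?_)
    simp [P, Pi.sup_apply]

/-- The maximal ergodic theorem (Garsia's proof). -/
theorem maximal (hT : Measurable T) (hTm : MeasurePreserving T μ μ)
    (hf : Measurable f) (hfi : Integrable f μ) (N : ℕ) :
    0 ≤ ∫ x in {x | 0 < P T f N x}, f x ∂μ := by
  set A : Set α := {x | 0 < P T f N x} with hA
  have hAm : MeasurableSet A := measurableSet_lt measurable_const (measurable_P hT hf N)
  have hPi := integrable_P hTm hfi N
  have hPTi : Integrable (fun x => P T f N (T x)) μ :=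
    ((hTm.integrable_comp hPi.aestronglyMeasurable).2 hPi)
  -- pointwise inequality on A
  have key : ∀ x ∈ A, P T f N x ≤ f x + P T f N (T x) := by
    intro x hx
    rcases P_cases N x with h | ⟨n, hn1, hn2, hn3⟩
    · exact absurd h (by simpa [hA] using (ne_of_gt hx))
    · obtain ⟨m, rfl⟩ := Nat.exists_eq_add_of_le hn1
      rw [hn3, show 1 + m = m + 1 from Nat.add_comm 1 m, S_succ' m x]
      have : S T f m (T x) ≤ P T f N (T x) := S_le_P (by omega) (T x)
      linarith
  -- integrate
  have h1 : ∫ x in A, P T f N x ∂μ ≤ ∫ x in A, (f x + P T f N (T x)) ∂μ := by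
    refine setIntegral_mono_on hPi.integrableOn (hfi.integrableOn.add hPTi.integrableOn) hAm key
  have h2 : ∫ x in A, (f x + P T f N (T x)) ∂μ
      = ∫ x in A, f x ∂μ + ∫ x in A, P T f N (T x) ∂μ :=
    integral_add hfi.integrableOn hPTi.integrableOn
  have h3 : ∫ x in A, P T f N (T x) ∂μ ≤ ∫ x, P T f N (T x) ∂μ :=
    setIntegral_le_integral hPTi (Eventually.of_forall fun x => P_nonneg N (T x))
  have h4 : ∫ x, P T f N (T x) ∂μ = ∫ x, P T f N x ∂μ := by
    rw [← integral_map hTm.measurable.aemeasurable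
      (by rw [hTm.map_eq]; exact hPi.aestronglyMeasurable), hTm.map_eq]
  have h5 : ∫ x in A, P T f N x ∂μ = ∫ x, P T f N x ∂μ := by
    have hc : ∫ x in Aᶜ, P T f N x ∂μ = 0 := by
      rw [setIntegral_congr_fun hAm.compl (g := fun _ => (0:ℝ))]
      · simp
      · intro x hx
        simp only [hA, mem_compl_iff, mem_setOf_eq, not_lt] at hx
        exact le_antisymm hx (P_nonneg N x)
    rw [← integral_add_compl hAm hPi, hc, add_zero]
  linarith

/-- One-sided ergodic lemma: the invariant "limsup of averages exceeds `c`" set is null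
when `c > ∫ f`. -/
theorem null_G (hT : Measurable T) (hTm : MeasurePreserving T μ μ)
    (herg : ∀ F : Set α, MeasurableSet F → T ⁻¹' F = F → μ F = 0 ∨ μ F = 1)
    (hf : Measurable f) (hfi : Integrable f μ) (c : ℝ) (hc : ∫ x, f x ∂μ < c) :
    μ {x | ∀ q : ℚ, (q:ℝ) < c → ∃ᶠ n in atTop, (q:ℝ) < S T f n x / n} = 0 := by
  set G : Set α := {x | ∀ q : ℚ, (q:ℝ) < c → ∃ᶠ n in atTop, (q:ℝ) < S T f n x / n} with hG
  have hGm : MeasurableSet G := by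
    have : G = ⋂ (q : ℚ), ⋂ (_ : (q:ℝ) < c), ⋂ (N : ℕ), ⋃ (n : ℕ), ⋃ (_ : N ≤ n),
        {x | (q:ℝ) < S T f n x / n} := by
      ext x
      simp only [hG, mem_setOf_eq, mem_iInter, mem_iUnion, frequently_atTop]
      constructor
      · intro h q hq N; obtain ⟨n, hn1, hn2⟩ := h q hq N; exact ⟨n, hn1, hn2⟩
      · intro h q hq N; obtain ⟨n, hn1, hn2⟩ := h q hq N; exact ⟨n, hn1, hn2⟩
    rw [this]
    refine MeasurableSet.iInter fun q => MeasurableSet.iInter fun _ =>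
      MeasurableSet.iInter fun N => MeasurableSet.iUnion fun n => MeasurableSet.iUnion fun _ => ?_
    exact measurableSet_lt measurable_const ((measurable_S hT hf n).div_const _)
  have hGinv : T ⁻¹' G = G := by
    ext x
    simp only [mem_preimage, hG, mem_setOf_eq]
    constructor
    · -- T x ∈ G → x ∈ G
      intro h q hq
      obtain ⟨q', hq1, hq2⟩ := exists_rat_btwn hq
      have hfreq := h q' hq2
      rw [frequently_atTop] at hfreq ⊢
      intro N
      obtain ⟨M, hM⟩ := exists_nat_gt (((q:ℝ) - f x) / ((q':ℝ) - q))
      obtain ⟨n, hn1, hn2⟩ := hfreq (max N M)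
      have hnN : N ≤ n := le_trans (le_max_left _ _) hn1
      have hnM : (M:ℝ) ≤ n := by exact_mod_cast le_trans (le_max_right _ _) hn1
      refine ⟨n+1, by omega, ?_⟩
      have hnpos : (0:ℝ) < (n:ℝ) + 1 := by positivity
      rw [S_succ' n x]
      have hcast : ((n+1 : ℕ):ℝ) = (n:ℝ)+1 := by push_cast; ring
      rw [hcast, lt_div_iff₀ hnpos]
      push_cast
      have hq'q : (0:ℝ) < (q':ℝ) - q := by exact_mod_cast sub_pos.2 hq1
      have hmain : ((q:ℝ) - f x) < n * ((q':ℝ) - q) := by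
        rcases le_or_gt (n:ℝ) 0 with h0 | h0
        · have : (n:ℝ) = 0 := le_antisymm h0 (Nat.cast_nonneg n)
          rw [div_lt_iff₀ hq'q] at hM
          nlinarith
        · rw [div_lt_iff₀ hq'q] at hM
          nlinarith
      rcases Nat.eq_zero_or_pos n with rfl | hn0
      · simp only [Nat.cast_zero] at hmain ⊢
        simp only [S, Finset.range_zero, Finset.sum_empty]
        linarith
      · have hnpos' : (0:ℝ) < (n:ℝ) := by exact_mod_cast hn0
        rw [lt_div_iff₀ hnpos'] at hn2
        nlinarith
    · -- x ∈ G → T x ∈ G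
      intro h q hq
      obtain ⟨q', hq1, hq2⟩ := exists_rat_btwn hq
      have hfreq := h q' hq2
      rw [frequently_atTop] at hfreq ⊢
      intro N
      obtain ⟨M, hM⟩ := exists_nat_gt ((f x - (q':ℝ)) / ((q':ℝ) - q))
      obtain ⟨n, hn1, hn2⟩ := hfreq (max (N+1) (max (M+1) 2))
      have hnN : N + 1 ≤ n := le_trans (le_max_left _ _) hn1
      have hnM : M + 1 ≤ n := le_trans (le_trans (le_max_left _ _) (le_max_right _ _)) hn1
      have hn2le : 2 ≤ n := le_trans (le_trans (le_max_right _ _) (le_max_right _ _)) hn1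
      obtain ⟨m, rfl⟩ : ∃ m, n = m + 1 := ⟨n - 1, by omega⟩
      refine ⟨m, by omega, ?_⟩
      have hq'q : (0:ℝ) < (q':ℝ) - q := by exact_mod_cast sub_pos.2 hq1
      have hmpos : (0:ℝ) < (m:ℝ) := by
        have : 1 ≤ m := by omega
        exact_mod_cast Nat.lt_of_lt_of_le Nat.zero_lt_one this
      have hMm : ((f x - (q':ℝ)) / ((q':ℝ) - q)) < m := by
        have h1 : (M:ℝ) ≤ m := by exact_mod_cast (by omega : M ≤ m)
        linarith
      rw [div_lt_iff₀ hq'q] at hMm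
      have hn2' : (q':ℝ) * ((m:ℝ)+1) < S T f (m+1) x := by
        have : (0:ℝ) < (m:ℝ) + 1 := by positivity
        rw [lt_div_iff₀ (by exact_mod_cast this)] at hn2
        push_cast at hn2 ⊢
        linarith
      rw [lt_div_iff₀ hmpos]
      have hS : S T f (m+1) x = S T f m (T x) + f x := S_succ' m x
      nlinarith
  rcases herg G hGm hGinv with h0 | h1
  · exact h0
  · exfalso
    obtain ⟨q₀, hq₀1, hq₀2⟩ := exists_rat_btwn hc
    set g : α → ℝ := fun x => f x - q₀ with hg
    have hgm : Measurable g := hf.sub measurable_const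
    have hgi : Integrable g μ := hfi.sub (integrable_const _)
    have hSg : ∀ n x, S T g n x = S T f n x - n * q₀ := by
      intro n x
      simp only [S, hg, Finset.sum_sub_distrib, Finset.sum_const, Finset.card_range,
        nsmul_eq_mul]
    set A : ℕ → Set α := fun N => {x | 0 < P T g N x} with hA
    have hAm : ∀ N, MeasurableSet (A N) := fun N =>
      measurableSet_lt measurable_const (measurable_P hT hgm N)
    have hAmono : Monotone A := fun N M h x hx => lt_of_lt_of_le hx (P_mono h x)
    set B : Set α := ⋃ N, A N with hB
    have hBm : MeasurableSet B := MeasurableSet.iUnion hAm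
    have hGB : G ⊆ B := by
      intro x hx
      have := hx q₀ hq₀2
      rw [frequently_atTop] at this
      obtain ⟨n, hn1, hn2⟩ := this 1
      have hnpos : (0:ℝ) < (n:ℝ) := by exact_mod_cast hn1
      rw [lt_div_iff₀ hnpos] at hn2
      have : 0 < S T g n x := by rw [hSg]; linarith
      exact mem_iUnion.2 ⟨n, lt_of_lt_of_le this (S_le_P (le_refl n) x)⟩
    have hμB : μ B = 1 := le_antisymm prob_le_one (h1 ▸ measure_mono hGB)
    have htend : Tendsto (fun N => ∫ x in A N, g x ∂μ) atTop (𝓝 (∫ x in B, g x ∂μ)) :=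
      tendsto_setIntegral_of_monotone hAm hAmono hgi.integrableOn
    have hBnn : 0 ≤ ∫ x in B, g x ∂μ :=
      ge_of_tendsto' htend (fun N => maximal hT hTm hgm hgi N)
    have hBc : μ Bᶜ = 0 := by
      rw [measure_compl hBm (measure_ne_top μ B), hμB, measure_univ, tsub_self]
    have hIB : ∫ x in B, g x ∂μ = ∫ x, g x ∂μ := by
      have hr0 : μ.restrict Bᶜ = 0 := Measure.restrict_eq_zero.2 hBc
      rw [← integral_add_compl hBm hgi, hr0, integral_zero_measure, add_zero]
    have hIg : ∫ x, g x ∂μ = (∫ x, f x ∂μ) - q₀ := by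
      rw [hg]
      rw [integral_sub hfi (integrable_const _), integral_const, probReal_univ]
      simp
    rw [hIB, hIg] at hBnn
    linarith

/-- Birkhoff's pointwise ergodic theorem, ergodic case. -/
theorem birkhoff (hT : Measurable T) (hTm : MeasurePreserving T μ μ)
    (herg : ∀ F : Set α, MeasurableSet F → T ⁻¹' F = F → μ F = 0 ∨ μ F = 1)
    (hf : Measurable f) (hfi : Integrable f μ) :
    ∀ᵐ x ∂μ, Tendsto (fun n => S T f n x / n) atTop (𝓝 (∫ x, f x ∂μ)) := by
  set c₀ : ℝ := ∫ x, f x ∂μ with hc₀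
  have hneg : ∀ n x, S T (fun y => -f y) n x = - S T f n x := by
    intro n x; simp [S]
  have hup : ∀ᵐ x ∂μ, ∀ k : ℕ,
      ¬ (∀ q : ℚ, (q:ℝ) < c₀ + 1/((k:ℝ)+1) → ∃ᶠ n in atTop, (q:ℝ) < S T f n x / n) := by
    rw [ae_all_iff]
    intro k
    have hpos : (0:ℝ) < 1/((k:ℝ)+1) := by positivity
    have h := null_G hT hTm herg hf hfi (c₀ + 1/((k:ℝ)+1)) (by rw [← hc₀]; linarith)
    exact (measure_eq_zero_iff_ae_notMem.1 h)
  have hdn : ∀ᵐ x ∂μ, ∀ k : ℕ,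
      ¬ (∀ q : ℚ, (q:ℝ) < -c₀ + 1/((k:ℝ)+1) → ∃ᶠ n in atTop, (q:ℝ) < - (S T f n x / n)) := by
    rw [ae_all_iff]
    intro k
    have hpos : (0:ℝ) < 1/((k:ℝ)+1) := by positivity
    have hint : ∫ x, (fun y => -(f y)) x ∂μ = -c₀ := by simp [integral_neg, hc₀]
    have h := null_G (f := fun y => -(f y)) hT hTm herg hf.neg hfi.neg (-c₀ + 1/((k:ℝ)+1))
      (by rw [hint]; linarith)
    have h' := measure_eq_zero_iff_ae_notMem.1 h
    filter_upwards [h'] with x hx hcon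
    apply hx
    intro q hq
    have := hcon q hq
    refine this.mono fun n hn => ?_
    rw [hneg, neg_div]
    exact hn
  filter_upwards [hup, hdn] with x hx1 hx2
  rw [Metric.tendsto_atTop]
  intro ε hε
  obtain ⟨k, hk⟩ := exists_nat_one_div_lt hε
  have h1 := hx1 k
  have h2 := hx2 k
  push_neg at h1 h2
  obtain ⟨q1, hq11, hq12⟩ := h1
  obtain ⟨q2, hq21, hq22⟩ := h2
  simp only [← not_lt] at hq12 hq22
  have hev1 : ∀ᶠ n in atTop, S T f n x / n ≤ q1 := hq12.mono fun n hn => not_lt.1 hn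
  have hev2 : ∀ᶠ n in atTop, -(q2:ℝ) ≤ S T f n x / n := hq22.mono fun n hn => by
    have := not_lt.1 hn; linarith
  have := (hev1.and hev2).and (eventually_ge_atTop 1)
  rw [eventually_atTop] at this
  obtain ⟨N, hN⟩ := this
  refine ⟨N, fun n hn => ?_⟩
  obtain ⟨⟨ha, hb⟩, _⟩ := hN n hn
  rw [Real.dist_eq, abs_lt]
  constructor
  · have : -(q2:ℝ) > c₀ - 1/((k:ℝ)+1) := by linarith
    have h3 : 1/((k:ℝ)+1) < ε := hk
    linarith
  · have h3 : 1/((k:ℝ)+1) < ε := hk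
    linarith

end BirkhoffAux

namespace AMSAux
open BirkhoffAux

lemma measurable_shift : Measurable shift :=
  measurable_pi_lambda _ (fun n => measurable_pi_apply (n+1))

lemma shift_iterate (i : ℕ) (x : ℕ → ℝ) (j : ℕ) : shift^[i] x j = x (j + i) := by
  induction i generalizing x j with
  | zero => rfl
  | succ i ih =>
    rw [Function.iterate_succ_apply, ih]
    have hj : j + i + 1 = j + (i + 1) := by omega
    simp [shift, hj]

lemma avg_shift_tendsto {u : ℕ → ℝ} {L : ℝ}
    (h : Tendsto (fun n : ℕ => (∑ i ∈ Finset.range n, u i) / n) atTop (𝓝 L)) :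
    Tendsto (fun n : ℕ => (∑ i ∈ Finset.range n, u (i+1)) / n) atTop (𝓝 L) := by
  have l1 : Tendsto (fun n : ℕ => (∑ i ∈ Finset.range (n+1), u i) / ((n:ℝ)+1)) atTop (𝓝 L) := by
    have := (tendsto_add_atTop_iff_nat 1).2 h
    refine this.congr fun n => ?_
    norm_cast
  have l2 : Tendsto (fun n : ℕ => ((n:ℝ)+1) / n) atTop (𝓝 1) := by
    have h0 : Tendsto (fun n : ℕ => 1 + 1/(n:ℝ)) atTop (𝓝 (1 + 0)) :=
      (tendsto_const_nhds.add (tendsto_const_div_atTop_nhds_zero_nat 1))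
    rw [add_zero] at h0
    refine Tendsto.congr' ?_ h0
    filter_upwards [eventually_ge_atTop 1] with n hn
    have hne : (n:ℝ) ≠ 0 := Nat.cast_ne_zero.2 (by omega)
    field_simp
  have l3 : Tendsto (fun n : ℕ => u 0 / (n:ℝ)) atTop (𝓝 0) :=
    tendsto_const_div_atTop_nhds_zero_nat (u 0)
  have lmain : Tendsto (fun n : ℕ =>
      ((∑ i ∈ Finset.range (n+1), u i) / ((n:ℝ)+1)) * (((n:ℝ)+1)/n) - u 0 / n) atTop
      (𝓝 (L * 1 - 0)) := (l1.mul l2).sub l3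
  rw [mul_one, sub_zero] at lmain
  refine Tendsto.congr' ?_ lmain
  filter_upwards [eventually_ge_atTop 1] with n hn
  have hn0 : (n:ℝ) ≠ 0 := by
    have : 0 < n := hn
    positivity
  have hsum : (∑ i ∈ Finset.range (n+1), u i) = (∑ i ∈ Finset.range n, u (i+1)) + u 0 :=
    Finset.sum_range_succ' u n
  rw [hsum]
  field_simp
  try ring

lemma avg_unshift_tendsto {u : ℕ → ℝ} {L : ℝ}
    (h : Tendsto (fun n : ℕ => (∑ i ∈ Finset.range n, u (i+1)) / n) atTop (𝓝 L)) :
    Tendsto (fun n : ℕ => (∑ i ∈ Finset.range n, u i) / n) atTop (𝓝 L) := by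
  have l2 : Tendsto (fun n : ℕ => (n:ℝ) / ((n:ℝ)+1)) atTop (𝓝 1) := by
    have h0 : Tendsto (fun n : ℕ => 1 - 1/((n:ℝ)+1)) atTop (𝓝 (1 - 0)) :=
      tendsto_const_nhds.sub tendsto_one_div_add_atTop_nhds_zero_nat
    rw [sub_zero] at h0
    refine Tendsto.congr (fun n => ?_) h0
    have : (n:ℝ) + 1 ≠ 0 := by positivity
    field_simp
    ring
  have l3 : Tendsto (fun n : ℕ => u 0 / ((n:ℝ)+1)) atTop (𝓝 0) := by
    have := tendsto_one_div_add_atTop_nhds_zero_nat (𝕜 := ℝ)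
    have h4 : Tendsto (fun n : ℕ => (u 0) * (1/((n:ℝ)+1))) atTop (𝓝 ((u 0) * 0)) :=
      tendsto_const_nhds.mul this
    rw [mul_zero] at h4
    refine h4.congr fun n => ?_
    field_simp
  have lmain : Tendsto (fun n : ℕ =>
      ((∑ i ∈ Finset.range n, u (i+1)) / n) * ((n:ℝ)/((n:ℝ)+1)) + u 0 / ((n:ℝ)+1)) atTop
      (𝓝 (L * 1 + 0)) := (h.mul l2).add l3
  rw [mul_one, add_zero] at lmain
  have leq : ∀ n : ℕ, ((∑ i ∈ Finset.range n, u (i+1)) / n) * ((n:ℝ)/((n:ℝ)+1)) + u 0 / ((n:ℝ)+1)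
      = (∑ i ∈ Finset.range (n+1), u i) / ((n:ℝ)+1) := by
    intro n
    have hsum : (∑ i ∈ Finset.range (n+1), u i) = (∑ i ∈ Finset.range n, u (i+1)) + u 0 :=
      Finset.sum_range_succ' u n
    rcases Nat.eq_zero_or_pos n with rfl | hn
    · simp
    · have hn0 : (n:ℝ) ≠ 0 := by
        have : 0 < n := hn
        positivity
      have hn1 : (n:ℝ) + 1 ≠ 0 := by positivity
      rw [hsum]
      field_simp
      try ring
  rw [show (fun n : ℕ => ((∑ i ∈ Finset.range n, u (i+1)) / (n:ℝ)) * ((n:ℝ)/((n:ℝ)+1)) + u 0 / ((n:ℝ)+1))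
      = (fun n : ℕ => (∑ i ∈ Finset.range (n+1), u i) / ((n:ℝ)+1)) from funext leq] at lmain
  rw [← tendsto_add_atTop_iff_nat 1]
  refine lmain.congr fun n => ?_
  norm_cast

lemma iterate_preimage {F : Set (ℕ → ℝ)} (h : shift ⁻¹' F = F) (i : ℕ) :
    shift^[i] ⁻¹' F = F := by
  induction i with
  | zero => rfl
  | succ i ih => rw [Function.iterate_succ, Set.preimage_comp, ih, h]

variable {μ ν : Measure (ℕ → ℝ)} [IsProbabilityMeasure μ] [IsProbabilityMeasure ν]

lemma invariant_measure_eq (hAMS : HasStationaryMean μ ν) {F : Set (ℕ → ℝ)}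
    (hFm : MeasurableSet F) (hFinv : shift ⁻¹' F = F) : μ F = ν F := by
  have h := hAMS F hFm
  have heq : (fun n : ℕ => (∑ i ∈ Finset.range n, (μ (shift^[i] ⁻¹' F)).toReal) / n)
      =ᶠ[atTop] (fun _ => (μ F).toReal) := by
    filter_upwards [eventually_ge_atTop 1] with n hn
    have hsets : ∀ i, μ (shift^[i] ⁻¹' F) = μ F := fun i => by rw [iterate_preimage hFinv i]
    simp only [hsets, Finset.sum_const, Finset.card_range, nsmul_eq_mul]
    have hn0 : (n:ℝ) ≠ 0 := by
      have : 0 < n := hn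
      positivity
    field_simp
  have h2 : Tendsto (fun _ : ℕ => (μ F).toReal) atTop (𝓝 ((ν F).toReal)) := h.congr' heq
  have h3 : (μ F).toReal = (ν F).toReal := tendsto_nhds_unique tendsto_const_nhds h2
  exact (ENNReal.toReal_eq_toReal_iff' (measure_ne_top μ F) (measure_ne_top ν F)).1 h3

lemma stationary_nu (hAMS : HasStationaryMean μ ν) {F : Set (ℕ → ℝ)}
    (hFm : MeasurableSet F) : ν (shift ⁻¹' F) = ν F := by
  have h1 := hAMS F hFm
  have h2 := hAMS (shift ⁻¹' F) (measurable_shift hFm)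
  have hsets : ∀ i : ℕ, shift^[i] ⁻¹' (shift ⁻¹' F) = shift^[i+1] ⁻¹' F := by
    intro i
    rw [← Set.preimage_comp, ← Function.iterate_succ']
  have h2' : Tendsto (fun n : ℕ =>
      (∑ i ∈ Finset.range n, (μ (shift^[i+1] ⁻¹' F)).toReal) / n) atTop
      (𝓝 ((ν (shift ⁻¹' F)).toReal)) := by
    refine h2.congr fun n => ?_
    congr 1
    exact Finset.sum_congr rfl fun i _ => by rw [hsets i]
  have h1' := avg_shift_tendsto (u := fun i => (μ (shift^[i] ⁻¹' F)).toReal) h1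
  have h3 : (ν (shift ⁻¹' F)).toReal = (ν F).toReal := tendsto_nhds_unique h2' h1'
  exact (ENNReal.toReal_eq_toReal_iff' (measure_ne_top _ _) (measure_ne_top _ _)).1 h3

lemma ergodic_nu (hAMS : HasStationaryMean μ ν) (herg : IsErgodicShift μ) :
    ∀ F : Set (ℕ → ℝ), MeasurableSet F → shift ⁻¹' F = F → ν F = 0 ∨ ν F = 1 := by
  intro F hFm hFinv
  rw [← invariant_measure_eq hAMS hFm hFinv]
  exact herg F hFm hFinv

/-- Master a.s. ergodic-average convergence for AMS ergodic processes. -/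
theorem master (hAMS : HasStationaryMean μ ν) (herg : IsErgodicShift μ) (h : ℝ → ℝ)
    (hm : Measurable h) (hi : Integrable h (marginal1 ν)) :
    ∀ᵐ x ∂μ, Tendsto (fun n : ℕ => (∑ i ∈ Finset.range n, h (x i)) / (n:ℝ)) atTop
      (𝓝 (∫ t, h t ∂(marginal1 ν))) := by
  set c : ℝ := ∫ t, h t ∂(marginal1 ν) with hc
  have hsm : Measurable shift := measurable_shift
  have hmp : MeasurePreserving shift ν ν := by
    refine ⟨hsm, Measure.ext fun F hF => ?_⟩
    rw [Measure.map_apply hsm hF, stationary_nu hAMS hF]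
  have hergν := ergodic_nu hAMS herg
  set f : (ℕ → ℝ) → ℝ := fun x => h (x 0) with hf
  have he0 : Measurable (fun x : ℕ → ℝ => x 0) := measurable_pi_apply 0
  have hfm : Measurable f := hm.comp he0
  have hfi : Integrable f ν := by
    have := (integrable_map_measure hi.aestronglyMeasurable he0.aemeasurable).1
    exact this hi
  have hint : ∫ x, f x ∂ν = c := by
    rw [hc]
    exact (integral_map he0.aemeasurable hi.aestronglyMeasurable).symm
  have hbk := birkhoff (μ := ν) hsm hmp hergν hfm hfi
  rw [hint] at hbk
  have hSeq : ∀ (n : ℕ) (x : ℕ → ℝ), S shift f n x = ∑ i ∈ Finset.range n, h (x i) := by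
    intro n x
    refine Finset.sum_congr rfl fun i _ => ?_
    simp only [hf, shift_iterate i x 0, Nat.zero_add]
  set v : ℕ → (ℕ → ℝ) → ℝ := fun n x => (∑ i ∈ Finset.range n, h (x i)) / (n:ℝ) with hv
  have hvm : ∀ n, Measurable (v n) := by
    intro n
    refine Measurable.div_const ?_ _
    exact Finset.measurable_sum _ (fun i _ => hm.comp (measurable_pi_apply i))
  set C : Set (ℕ → ℝ) := {x | Tendsto (fun n : ℕ => v n x) atTop (𝓝 c)} with hC
  have hCm : MeasurableSet C := by
    have hCeq : C = ⋂ (j:ℕ), ⋃ (N:ℕ), ⋂ (n:ℕ), ⋂ (_ : N ≤ n),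
        {x | dist (v n x) c < 1/((j:ℝ)+1)} := by
      ext x
      simp only [hC, mem_iInter, mem_iUnion, mem_setOf_eq, Metric.tendsto_atTop]
      constructor
      · intro hx j
        obtain ⟨N, hN⟩ := hx (1/((j:ℝ)+1)) (by positivity)
        exact ⟨N, fun n hn => hN n hn⟩
      · intro hx ε hε
        obtain ⟨j, hj⟩ := exists_nat_one_div_lt hε
        obtain ⟨N, hN⟩ := hx j
        exact ⟨N, fun n hn => lt_trans (hN n hn) hj⟩
    rw [hCeq]
    refine MeasurableSet.iInter fun j => MeasurableSet.iUnion fun N =>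
      MeasurableSet.iInter fun n => MeasurableSet.iInter fun _ => ?_
    exact measurableSet_lt ((hvm n).dist measurable_const) measurable_const
  have hCinv : shift ⁻¹' C = C := by
    ext x
    simp only [mem_preimage, hC, mem_setOf_eq]
    have hvs : ∀ n, v n (shift x) = (∑ i ∈ Finset.range n, (fun i => h (x i)) (i+1)) / (n:ℝ) := by
      intro n; rfl
    constructor
    · intro hx
      have := hx.congr hvs
      exact avg_unshift_tendsto (u := fun i => h (x i)) this
    · intro hx
      have := avg_shift_tendsto (u := fun i => h (x i)) hx
      exact Tendsto.congr (fun n => (hvs n).symm) this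
  have hνCc : ν Cᶜ = 0 := by
    have hae : ∀ᵐ x ∂ν, x ∈ C := by
      filter_upwards [hbk] with x hx
      simp only [hC, mem_setOf_eq]
      refine hx.congr fun n => ?_
      rw [hSeq n x]
    exact ae_iff.1 hae
  have hνC : ν C = 1 := by
    refine le_antisymm prob_le_one ?_
    have : ν univ ≤ ν C + ν Cᶜ := by
      rw [← Set.union_compl_self C]
      exact measure_union_le C Cᶜ
    rw [measure_univ, hνCc, add_zero] at this
    exact this
  have hμC : μ C = 1 := by rw [invariant_measure_eq hAMS hCm hCinv, hνC]
  have hμCc : μ Cᶜ = 0 := by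
    rw [measure_compl hCm (measure_ne_top μ C), hμC, measure_univ, tsub_self]
  rw [ae_iff]
  convert hμCc using 2
  rfl

end AMSAux


namespace TailAux

lemma measurableSet_Btau (s : ℝ) : MeasurableSet (Btau s) :=
  measurableSet_Iic.union measurableSet_Ici

lemma mem_Btau {s t : ℝ} : t ∈ Btau s ↔ s ≤ |t| := by
  simp only [Btau, mem_union, mem_Iic, mem_Ici, le_abs]
  constructor
  · rintro (h | h)
    · right; linarith
    · left; exact h
  · rintro (h | h)
    · right; exact h
    · left; linarith

lemma mem_Ctau {s t : ℝ} : t ∈ Ctau s ↔ s < |t| := by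
  simp only [Ctau, mem_union, mem_Iio, mem_Ioi, lt_abs]
  constructor
  · rintro (h | h)
    · right; linarith
    · left; exact h
  · rintro (h | h)
    · right; exact h
    · left; linarith

lemma Btau_anti {s t : ℝ} (h : s ≤ t) : Btau t ⊆ Btau s :=
  fun u hu => mem_Btau.2 (le_trans h (mem_Btau.1 hu))

lemma Ctau_subset_Btau (s : ℝ) : Ctau s ⊆ Btau s :=
  fun u hu => mem_Btau.2 (le_of_lt (mem_Ctau.1 hu))

lemma Btau_nonpos {s : ℝ} (h : s ≤ 0) : Btau s = univ :=
  eq_univ_of_forall fun t => mem_Btau.2 (le_trans h (abs_nonneg t))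

lemma iInter_Btau (a : ℝ) : (⋂ k : ℕ, Btau (a - 1/((k:ℝ)+1))) = Btau a := by
  ext t
  simp only [mem_iInter, mem_Btau]
  constructor
  · intro h
    by_contra hc
    push_neg at hc
    obtain ⟨k, hk⟩ := exists_nat_one_div_lt (show (0:ℝ) < a - |t| by linarith)
    have := h k
    linarith
  · intro h k
    have : (0:ℝ) < 1/((k:ℝ)+1) := by positivity
    linarith

lemma iUnion_Btau (a : ℝ) : (⋃ k : ℕ, Btau (a + 1/((k:ℝ)+1))) = Ctau a := by
  ext t
  simp only [mem_iUnion, mem_Btau, mem_Ctau]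
  constructor
  · rintro ⟨k, hk⟩
    have : (0:ℝ) < 1/((k:ℝ)+1) := by positivity
    linarith
  · intro h
    obtain ⟨k, hk⟩ := exists_nat_one_div_lt (show (0:ℝ) < |t| - a by linarith)
    exact ⟨k, by linarith⟩

lemma Btau_eq_Ctau_union (a : ℝ) : Btau a = Ctau a ∪ {-a, a} := by
  ext t
  simp only [mem_union, mem_Btau, mem_Ctau, mem_insert_iff, mem_singleton_iff]
  constructor
  · intro h
    rcases lt_or_eq_of_le h with h' | h'
    · left; exact h'
    · right
      rcases abs_cases t with ⟨h1, _⟩ | ⟨h1, _⟩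
      · right; rw [← h1, h']
      · left
        have : -t = a := by rw [← h1, h']
        linarith
  · rintro (h | h | h)
    · exact le_of_lt h
    · subst h; rw [abs_neg]; exact le_abs_self a
    · subst h; exact le_abs_self t

variable (κ : Measure ℝ) [IsFiniteMeasure κ]

lemma tendsto_meas_lower (a : ℝ) :
    Tendsto (fun k : ℕ => κ (Btau (a - 1/((k:ℝ)+1)))) atTop (𝓝 (κ (Btau a))) := by
  have hanti : Antitone (fun k : ℕ => Btau (a - 1/((k:ℝ)+1))) := by
    intro k l hkl
    refine Btau_anti ?_
    have h1 : 1/((l:ℝ)+1) ≤ 1/((k:ℝ)+1) := by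
      apply one_div_le_one_div_of_le
      · positivity
      · have : (k:ℝ) ≤ l := by exact_mod_cast hkl
        linarith
    linarith
  have := tendsto_measure_iInter_atTop (μ := κ)
    (fun k => (measurableSet_Btau _).nullMeasurableSet) hanti ⟨0, measure_ne_top κ _⟩
  rwa [iInter_Btau] at this

lemma tendsto_meas_upper (a : ℝ) :
    Tendsto (fun k : ℕ => κ (Btau (a + 1/((k:ℝ)+1)))) atTop (𝓝 (κ (Ctau a))) := by
  have hmono : Monotone (fun k : ℕ => Btau (a + 1/((k:ℝ)+1))) := by
    intro k l hkl
    refine Btau_anti ?_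
    have h1 : 1/((l:ℝ)+1) ≤ 1/((k:ℝ)+1) := by
      apply one_div_le_one_div_of_le
      · positivity
      · have : (k:ℝ) ≤ l := by exact_mod_cast hkl
        linarith
    linarith
  have := tendsto_measure_iUnion_atTop (μ := κ) hmono
  rwa [iUnion_Btau] at this

lemma meas_pair_null (hat : ∀ t : ℝ, κ {t} = 0) (a : ℝ) : κ ({-a, a} : Set ℝ) = 0 := by
  have h1 : κ ({-a, a} : Set ℝ) ≤ κ {-a} + κ {a} := by
    rw [Set.insert_eq]
    exact measure_union_le _ _
  rw [hat, hat, add_zero] at h1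
  exact le_antisymm h1 zero_le

lemma meas_Btau_eq_Ctau (hat : ∀ t : ℝ, κ {t} = 0) (a : ℝ) : κ (Btau a) = κ (Ctau a) := by
  refine le_antisymm ?_ (measure_mono (Ctau_subset_Btau a))
  calc κ (Btau a) = κ (Ctau a ∪ {-a, a}) := by rw [Btau_eq_Ctau_union]
    _ ≤ κ (Ctau a) + κ ({-a, a} : Set ℝ) := measure_union_le _ _
    _ = κ (Ctau a) := by rw [meas_pair_null κ hat, add_zero]

lemma toReal_mono_Btau {s t : ℝ} (h : s ≤ t) : (κ (Btau t)).toReal ≤ (κ (Btau s)).toReal :=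
  ENNReal.toReal_mono (measure_ne_top κ _) (measure_mono (Btau_anti h))

lemma tendsto_toReal_meas_lower (a : ℝ) :
    Tendsto (fun k : ℕ => (κ (Btau (a - 1/((k:ℝ)+1)))).toReal) atTop (𝓝 ((κ (Btau a)).toReal)) :=
  (ENNReal.tendsto_toReal_iff (fun k => measure_ne_top κ _) (measure_ne_top κ _)).2
    (tendsto_meas_lower κ a)

lemma tendsto_toReal_meas_upper (a : ℝ) :
    Tendsto (fun k : ℕ => (κ (Btau (a + 1/((k:ℝ)+1)))).toReal) atTop (𝓝 ((κ (Ctau a)).toReal)) :=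
  (ENNReal.tendsto_toReal_iff (fun k => measure_ne_top κ _) (measure_ne_top κ _)).2
    (tendsto_meas_upper κ a)

/-- The tail probability tends to `0` along `ℕ`. -/
lemma tendsto_phi_atTop : Tendsto (fun k : ℕ => (κ (Btau (k:ℝ))).toReal) atTop (𝓝 0) := by
  have hempty : (⋂ k : ℕ, Btau ((k:ℝ))) = (∅ : Set ℝ) := by
    ext t
    simp only [mem_iInter, mem_Btau, mem_empty_iff_false, iff_false, not_forall, not_le]
    obtain ⟨k, hk⟩ := exists_nat_gt |t|
    exact ⟨k, hk⟩
  have hanti : Antitone (fun k : ℕ => Btau ((k:ℝ))) := by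
    intro k l hkl
    exact Btau_anti (by exact_mod_cast hkl)
  have h := tendsto_measure_iInter_atTop (μ := κ)
    (fun k => (measurableSet_Btau _).nullMeasurableSet) hanti ⟨0, measure_ne_top κ _⟩
  rw [hempty, measure_empty] at h
  have := (ENNReal.tendsto_toReal_iff (fun k => measure_ne_top κ _) (ENNReal.zero_ne_top)).2 h
  simpa using this

variable {κ}

lemma exists_phi_lt (hr : (0:ℝ) < r) : ∃ s : ℝ, (κ (Btau s)).toReal < r := by
  have := tendsto_phi_atTop κ
  have h2 := this.eventually (eventually_lt_nhds hr)
  obtain ⟨k, hk⟩ := h2.exists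
  exact ⟨(k:ℝ), hk⟩

end TailAux


namespace ThreshAux
open TailAux

variable {ν₁ : Measure ℝ} [IsProbabilityMeasure ν₁]

/-- Existence of a threshold achieving tail probability `r`. -/
lemma exists_tau (hat : ∀ t : ℝ, ν₁ {t} = 0) {r : ℝ} (hr : r ∈ Set.Ioc (0:ℝ) 1) :
    ∃ τ : ℝ, 0 ≤ τ ∧ phiTail ν₁ τ = r := by
  rcases eq_or_lt_of_le hr.2 with h1 | h1
  · refine ⟨0, le_refl 0, ?_⟩
    rw [phiTail, Btau_nonpos (le_refl (0:ℝ)), measure_univ]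
    simp [← h1]
  · -- r < 1
    set Ω : Set ℝ := {s | phiTail ν₁ s ≤ r} with hΩ
    have hΩne : Ω.Nonempty := by
      obtain ⟨s, hs⟩ := exists_phi_lt (κ := ν₁) hr.1
      exact ⟨s, le_of_lt hs⟩
    have hpos : ∀ s ∈ Ω, 0 < s := by
      intro s hs
      by_contra hc
      push_neg at hc
      have h1' : phiTail ν₁ s = 1 := by
        rw [phiTail, Btau_nonpos hc, measure_univ]
        simp
      have h2' : phiTail ν₁ s ≤ r := hs
      rw [h1'] at h2'
      linarith
    have hΩbd : BddBelow Ω := ⟨0, fun s hs => le_of_lt (hpos s hs)⟩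
    set τ := sInf Ω with hτdef
    have hτ0 : 0 ≤ τ := le_csInf hΩne (fun s hs => le_of_lt (hpos s hs))
    refine ⟨τ, hτ0, ?_⟩
    have hge : r ≤ phiTail ν₁ τ := by
      have hev : ∀ k : ℕ, r ≤ (ν₁ (Btau (τ - 1/((k:ℝ)+1)))).toReal := by
        intro k
        have hlt : τ - 1/((k:ℝ)+1) < τ := by
          have : (0:ℝ) < 1/((k:ℝ)+1) := by positivity
          linarith
        have hnm : τ - 1/((k:ℝ)+1) ∉ Ω := fun hmem => absurd (csInf_le hΩbd hmem) (not_le.2 hlt)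
        have : ¬ phiTail ν₁ (τ - 1/((k:ℝ)+1)) ≤ r := hnm
        rw [phiTail] at this
        linarith [not_le.1 this]
      exact ge_of_tendsto' (tendsto_toReal_meas_lower ν₁ τ) hev
    have hle : phiTail ν₁ τ ≤ r := by
      have hev : ∀ k : ℕ, (ν₁ (Btau (τ + 1/((k:ℝ)+1)))).toReal ≤ r := by
        intro k
        have hlt : τ < τ + 1/((k:ℝ)+1) := by
          have : (0:ℝ) < 1/((k:ℝ)+1) := by positivity
          linarith
        obtain ⟨s, hsΩ, hs⟩ := exists_lt_of_csInf_lt hΩne hlt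
        exact le_trans (toReal_mono_Btau ν₁ (le_of_lt hs)) hsΩ
      have := le_of_tendsto' (tendsto_toReal_meas_upper ν₁ τ) hev
      rwa [phiTail, meas_Btau_eq_Ctau ν₁ hat]
    exact le_antisymm hle hge

variable (ρ : Measure ℝ) [IsFiniteMeasure ρ]

/-- Approximating thresholds from above (tail probability `< r`). -/
lemma exists_sU (hat : ∀ t : ℝ, ν₁ {t} = 0) (hacρ : ρ ≪ ν₁) {r τ : ℝ}
    (hr0 : 0 < r) (hr1 : r ≤ 1) (hφτ : phiTail ν₁ τ = r) :
    ∃ s : ℕ → ℝ, (∀ j, phiTail ν₁ (s j) < r) ∧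
      Tendsto (fun j => (ρ (Btau (s j))).toReal) atTop (𝓝 ((ρ (Btau τ)).toReal)) := by
  have hatρ : ∀ t : ℝ, ρ {t} = 0 := fun t => hacρ (hat t)
  set Ω : Set ℝ := {s | phiTail ν₁ s < r} with hΩ
  have hΩne : Ω.Nonempty := exists_phi_lt (κ := ν₁) hr0
  have hpos : ∀ s ∈ Ω, 0 < s := by
    intro s hs
    by_contra hc
    push_neg at hc
    have h1 : phiTail ν₁ s = 1 := by
      rw [phiTail, Btau_nonpos hc, measure_univ]; simp
    have : phiTail ν₁ s < r := hs
    rw [h1] at this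
    linarith
  have hΩbd : BddBelow Ω := ⟨0, fun s hs => le_of_lt (hpos s hs)⟩
  set σ := sInf Ω with hσdef
  have hτσ : τ ≤ σ := by
    refine le_csInf hΩne (fun s hs => ?_)
    by_contra hc
    push_neg at hc
    have : r ≤ phiTail ν₁ s := by
      rw [← hφτ, phiTail, phiTail]
      exact toReal_mono_Btau ν₁ (le_of_lt hc)
    have h2 : phiTail ν₁ s < r := hs
    linarith
  -- ν₁ (Btau σ) from below
  have hgeσ : r ≤ (ν₁ (Btau σ)).toReal := by
    have hev : ∀ k : ℕ, r ≤ (ν₁ (Btau (σ - 1/((k:ℝ)+1)))).toReal := by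
      intro k
      have hlt : σ - 1/((k:ℝ)+1) < σ := by
        have : (0:ℝ) < 1/((k:ℝ)+1) := by positivity
        linarith
      have hnm : σ - 1/((k:ℝ)+1) ∉ Ω := fun hmem => absurd (csInf_le hΩbd hmem) (not_le.2 hlt)
      have h2 : ¬ phiTail ν₁ (σ - 1/((k:ℝ)+1)) < r := hnm
      rw [phiTail] at h2
      linarith [not_lt.1 h2]
    exact ge_of_tendsto' (tendsto_toReal_meas_lower ν₁ σ) hev
  have hleσ : (ν₁ (Btau σ)).toReal ≤ r := by
    have hev : ∀ k : ℕ, (ν₁ (Btau (σ + 1/((k:ℝ)+1)))).toReal ≤ r := by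
      intro k
      have hlt : σ < σ + 1/((k:ℝ)+1) := by
        have : (0:ℝ) < 1/((k:ℝ)+1) := by positivity
        linarith
      obtain ⟨s, hsΩ, hs⟩ := exists_lt_of_csInf_lt hΩne hlt
      exact le_trans (toReal_mono_Btau ν₁ (le_of_lt hs)) (le_of_lt hsΩ)
    have := le_of_tendsto' (tendsto_toReal_meas_upper ν₁ σ) hev
    rwa [meas_Btau_eq_Ctau ν₁ hat]
  have hφσ : (ν₁ (Btau σ)).toReal = r := le_antisymm hleσ hgeσ
  -- ρ (Btau σ) = ρ (Btau τ)
  have hmeq : ν₁ (Btau τ) = ν₁ (Btau σ) := by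
    refine (ENNReal.toReal_eq_toReal_iff' (measure_ne_top _ _) (measure_ne_top _ _)).1 ?_
    rw [hφσ, ← hφτ, phiTail]
  have hdiff : ν₁ (Btau τ \ Btau σ) = 0 := by
    rw [measure_diff (Btau_anti hτσ) (measurableSet_Btau σ).nullMeasurableSet
      (measure_ne_top _ _), hmeq, tsub_self]
  have hρdiff : ρ (Btau τ \ Btau σ) = 0 := hacρ hdiff
  have hρeq : ρ (Btau σ) = ρ (Btau τ) := by
    refine le_antisymm (measure_mono (Btau_anti hτσ)) ?_
    calc ρ (Btau τ) ≤ ρ (Btau σ ∪ Btau τ \ Btau σ) := by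
          refine measure_mono ?_
          rw [Set.union_diff_cancel (Btau_anti hτσ)]
      _ ≤ ρ (Btau σ) + ρ (Btau τ \ Btau σ) := measure_union_le _ _
      _ = ρ (Btau σ) := by rw [hρdiff, add_zero]
  -- choose approximating members
  have hchoice : ∀ j : ℕ, ∃ s ∈ Ω, s < σ + 1/((j:ℝ)+1) := by
    intro j
    refine exists_lt_of_csInf_lt hΩne ?_
    have : (0:ℝ) < 1/((j:ℝ)+1) := by positivity
    linarith
  choose s hsΩ hslt using hchoice
  have hsge : ∀ j, σ ≤ s j := fun j => csInf_le hΩbd (hsΩ j)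
  refine ⟨s, fun j => hsΩ j, ?_⟩
  have hub : ∀ j : ℕ, (ρ (Btau (s j))).toReal ≤ (ρ (Btau τ)).toReal := by
    intro j
    rw [← hρeq]
    exact toReal_mono_Btau ρ (hsge j)
  have hlb : ∀ j : ℕ, (ρ (Btau (σ + 1/((j:ℝ)+1)))).toReal ≤ (ρ (Btau (s j))).toReal :=
    fun j => toReal_mono_Btau ρ (le_of_lt (hslt j))
  have hlimlb : Tendsto (fun j : ℕ => (ρ (Btau (σ + 1/((j:ℝ)+1)))).toReal) atTop
      (𝓝 ((ρ (Btau τ)).toReal)) := by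
    have h1 := tendsto_toReal_meas_upper ρ σ
    rw [show (ρ (Ctau σ)).toReal = (ρ (Btau τ)).toReal by
      rw [← meas_Btau_eq_Ctau ρ hatρ, hρeq]] at h1
    exact h1
  exact tendsto_of_tendsto_of_tendsto_of_le_of_le hlimlb tendsto_const_nhds hlb hub

/-- Approximating thresholds from below (tail probability `> r`). -/
lemma exists_sL (hat : ∀ t : ℝ, ν₁ {t} = 0) (hacρ : ρ ≪ ν₁) {r τ : ℝ}
    (hr0 : 0 < r) (hφτ : phiTail ν₁ τ = r) (hex : ∃ s : ℝ, r < phiTail ν₁ s) :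
    ∃ s : ℕ → ℝ, (∀ j, r < phiTail ν₁ (s j)) ∧
      Tendsto (fun j => (ρ (Btau (s j))).toReal) atTop (𝓝 ((ρ (Btau τ)).toReal)) := by
  have hatρ : ∀ t : ℝ, ρ {t} = 0 := fun t => hacρ (hat t)
  set Ω : Set ℝ := {s | r < phiTail ν₁ s} with hΩ
  have hΩne : Ω.Nonempty := hex
  obtain ⟨S₀, hS₀⟩ := exists_phi_lt (κ := ν₁) hr0
  have hΩbd : BddAbove Ω := by
    refine ⟨S₀, fun s hs => ?_⟩
    by_contra hc
    push_neg at hc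
    have h3 : phiTail ν₁ s ≤ phiTail ν₁ S₀ := toReal_mono_Btau ν₁ (le_of_lt hc)
    have h2 : r < phiTail ν₁ s := hs
    have h4 : phiTail ν₁ S₀ < r := hS₀
    linarith
  set σ := sSup Ω with hσdef
  have hστ : σ ≤ τ := by
    refine csSup_le hΩne (fun s hs => ?_)
    by_contra hc
    push_neg at hc
    have : phiTail ν₁ s ≤ r := by
      rw [← hφτ]
      exact toReal_mono_Btau ν₁ (le_of_lt hc)
    have h2 : r < phiTail ν₁ s := hs
    linarith
  have hgeσ : r ≤ (ν₁ (Btau σ)).toReal := by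
    have hev : ∀ k : ℕ, r ≤ (ν₁ (Btau (σ - 1/((k:ℝ)+1)))).toReal := by
      intro k
      have hlt : σ - 1/((k:ℝ)+1) < σ := by
        have : (0:ℝ) < 1/((k:ℝ)+1) := by positivity
        linarith
      obtain ⟨s, hsΩ, hs⟩ := exists_lt_of_lt_csSup hΩne hlt
      have h2 : r < phiTail ν₁ s := hsΩ
      rw [phiTail] at h2
      exact le_trans (le_of_lt h2) (toReal_mono_Btau ν₁ (le_of_lt hs))
    exact ge_of_tendsto' (tendsto_toReal_meas_lower ν₁ σ) hev
  have hleσ : (ν₁ (Btau σ)).toReal ≤ r := by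
    have hev : ∀ k : ℕ, (ν₁ (Btau (σ + 1/((k:ℝ)+1)))).toReal ≤ r := by
      intro k
      have hlt : σ < σ + 1/((k:ℝ)+1) := by
        have : (0:ℝ) < 1/((k:ℝ)+1) := by positivity
        linarith
      have hnm : σ + 1/((k:ℝ)+1) ∉ Ω := fun hmem => absurd (le_csSup hΩbd hmem) (not_le.2 hlt)
      have h2 : ¬ r < phiTail ν₁ (σ + 1/((k:ℝ)+1)) := hnm
      rw [phiTail] at h2
      linarith [not_lt.1 h2]
    have := le_of_tendsto' (tendsto_toReal_meas_upper ν₁ σ) hev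
    rwa [meas_Btau_eq_Ctau ν₁ hat]
  have hφσ : (ν₁ (Btau σ)).toReal = r := le_antisymm hleσ hgeσ
  have hmeq : ν₁ (Btau σ) = ν₁ (Btau τ) := by
    refine (ENNReal.toReal_eq_toReal_iff' (measure_ne_top _ _) (measure_ne_top _ _)).1 ?_
    rw [hφσ, ← hφτ, phiTail]
  have hdiff : ν₁ (Btau σ \ Btau τ) = 0 := by
    rw [measure_diff (Btau_anti hστ) (measurableSet_Btau τ).nullMeasurableSet
      (measure_ne_top _ _), hmeq, tsub_self]
  have hρdiff : ρ (Btau σ \ Btau τ) = 0 := hacρ hdiff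
  have hρeq : ρ (Btau σ) = ρ (Btau τ) := by
    refine le_antisymm ?_ (measure_mono (Btau_anti hστ))
    calc ρ (Btau σ) ≤ ρ (Btau τ ∪ Btau σ \ Btau τ) := by
          refine measure_mono ?_
          rw [Set.union_diff_cancel (Btau_anti hστ)]
      _ ≤ ρ (Btau τ) + ρ (Btau σ \ Btau τ) := measure_union_le _ _
      _ = ρ (Btau τ) := by rw [hρdiff, add_zero]
  have hchoice : ∀ j : ℕ, ∃ s ∈ Ω, σ - 1/((j:ℝ)+1) < s := by
    intro j
    refine exists_lt_of_lt_csSup hΩne ?_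
    have : (0:ℝ) < 1/((j:ℝ)+1) := by positivity
    linarith
  choose s hsΩ hslt using hchoice
  have hsle : ∀ j, s j ≤ σ := fun j => le_csSup hΩbd (hsΩ j)
  refine ⟨s, fun j => hsΩ j, ?_⟩
  have hlb : ∀ j : ℕ, (ρ (Btau τ)).toReal ≤ (ρ (Btau (s j))).toReal := by
    intro j
    rw [← hρeq]
    exact toReal_mono_Btau ρ (hsle j)
  have hub : ∀ j : ℕ, (ρ (Btau (s j))).toReal ≤ (ρ (Btau (σ - 1/((j:ℝ)+1)))).toReal :=
    fun j => toReal_mono_Btau ρ (le_of_lt (hslt j))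
  have hlimub : Tendsto (fun j : ℕ => (ρ (Btau (σ - 1/((j:ℝ)+1)))).toReal) atTop
      (𝓝 ((ρ (Btau τ)).toReal)) := by
    have h1 := tendsto_toReal_meas_lower ρ σ
    rwa [hρeq] at h1
  exact tendsto_of_tendsto_of_tendsto_of_le_of_le tendsto_const_nhds hlimub hlb hub

end ThreshAux


namespace DetAux

/-- Key rearrangement inequality: a sum over any `k`-subset is at most the sum over the
"large entries" set, provided `k` is at most its cardinality. -/
lemma key_sum_le {n : ℕ} (x : ℕ → ℝ) (p s : ℝ) (hp : 0 ≤ p) (S : Finset (Fin n))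
    (hcard : S.card ≤ (Finset.univ.filter (fun i : Fin n => s ≤ |x (i:ℕ)|)).card) :
    ∑ i ∈ S, |x (i:ℕ)| ^ p
      ≤ ∑ i ∈ Finset.univ.filter (fun i : Fin n => s ≤ |x (i:ℕ)|), |x (i:ℕ)| ^ p := by
  classical
  set B := Finset.univ.filter (fun i : Fin n => s ≤ |x (i:ℕ)|) with hBdef
  by_cases hSB : S \ B = ∅
  · have hsub : S ⊆ B := Finset.sdiff_eq_empty_iff_subset.1 hSB
    exact Finset.sum_le_sum_of_subset_of_nonneg hsub
      (fun i _ _ => Real.rpow_nonneg (abs_nonneg _) p)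
  · obtain ⟨i0, hi0⟩ := Finset.nonempty_iff_ne_empty.2 hSB
    have hi0B : i0 ∉ B := (Finset.mem_sdiff.1 hi0).2
    have hi0lt : |x (i0:ℕ)| < s := by
      by_contra hc
      exact hi0B (Finset.mem_filter.2 ⟨Finset.mem_univ _, not_lt.1 hc⟩)
    have hs : 0 < s := lt_of_le_of_lt (abs_nonneg _) hi0lt
    have hsp : 0 ≤ s ^ p := Real.rpow_nonneg (le_of_lt hs) p
    have h1 : ∑ i ∈ S \ B, |x (i:ℕ)| ^ p ≤ ((S \ B).card : ℝ) * (s ^ p) := by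
      have := Finset.sum_le_card_nsmul (S \ B) (fun i => |x (i:ℕ)| ^ p) (s ^ p)
        (fun i hi => by
          have hiB : i ∉ B := (Finset.mem_sdiff.1 hi).2
          have hlt : |x (i:ℕ)| < s := by
            by_contra hc
            exact hiB (Finset.mem_filter.2 ⟨Finset.mem_univ _, not_lt.1 hc⟩)
          exact Real.rpow_le_rpow (abs_nonneg _) (le_of_lt hlt) hp)
      rwa [nsmul_eq_mul] at this
    have h2 : ((B \ S).card : ℝ) * (s ^ p) ≤ ∑ i ∈ B \ S, |x (i:ℕ)| ^ p := by
      have := Finset.card_nsmul_le_sum (B \ S) (fun i => |x (i:ℕ)| ^ p) (s ^ p)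
        (fun i hi => by
          have hiB : i ∈ B := (Finset.mem_sdiff.1 hi).1
          exact Real.rpow_le_rpow (le_of_lt hs) (Finset.mem_filter.1 hiB).2 hp)
      rwa [nsmul_eq_mul] at this
    have hcards : (S \ B).card ≤ (B \ S).card := by
      have e1 := Finset.card_sdiff_add_card_inter S B
      have e2 := Finset.card_sdiff_add_card_inter B S
      have e3 : (S ∩ B).card = (B ∩ S).card := by rw [Finset.inter_comm]
      omega
    have h3 : ((S \ B).card : ℝ) * (s ^ p) ≤ ((B \ S).card : ℝ) * (s ^ p) :=
      mul_le_mul_of_nonneg_right (by exact_mod_cast hcards) hsp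
    have e4 := Finset.sum_inter_add_sum_sdiff S B (fun i => |x (i:ℕ)| ^ p)
    have e5 := Finset.sum_inter_add_sum_sdiff B S (fun i => |x (i:ℕ)| ^ p)
    have e6 : ∑ i ∈ S ∩ B, |x (i:ℕ)| ^ p = ∑ i ∈ B ∩ S, |x (i:ℕ)| ^ p := by
      rw [Finset.inter_comm]
    linarith

lemma Qset_nonneg {n k : ℕ} (p : ℝ) (x : Fin n → ℝ) :
    ∀ q ∈ {q : ℝ | ∃ S : Finset (Fin n), S.card = k ∧ q = ∑ i ∈ Sᶜ, |x i| ^ p}, 0 ≤ q := by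
  rintro q ⟨S, _, rfl⟩
  exact Finset.sum_nonneg fun i _ => Real.rpow_nonneg (abs_nonneg _) p

lemma Qset_empty {n k : ℕ} (p : ℝ) (x : Fin n → ℝ) (hk : n < k) :
    {q : ℝ | ∃ S : Finset (Fin n), S.card = k ∧ q = ∑ i ∈ Sᶜ, |x i| ^ p} = ∅ := by
  rw [Set.eq_empty_iff_forall_notMem]
  rintro q ⟨S, hc, _⟩
  have h1 : S.card ≤ n := by
    have := Finset.card_le_univ S
    rwa [Fintype.card_fin] at this
  omega

lemma Qset_nonempty {n k : ℕ} (p : ℝ) (x : Fin n → ℝ) (hk : k ≤ n) :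
    {q : ℝ | ∃ S : Finset (Fin n), S.card = k ∧ q = ∑ i ∈ Sᶜ, |x i| ^ p}.Nonempty := by
  obtain ⟨S, _, hcard⟩ := Finset.exists_subset_card_eq
    (show k ≤ (Finset.univ : Finset (Fin n)).card by rwa [Finset.card_univ, Fintype.card_fin])
  exact ⟨∑ i ∈ Sᶜ, |x i| ^ p, S, hcard, rfl⟩

lemma sigmaP_eq {n k : ℕ} (p : ℝ) (hp : 0 < p) (hk : k ≤ n) (x : Fin n → ℝ) :
    sigmaP p n k x
      = (sInf {q : ℝ | ∃ S : Finset (Fin n), S.card = k ∧ q = ∑ i ∈ Sᶜ, |x i| ^ p}) ^ (1/p) := by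
  classical
  set Q : Set ℝ := {q : ℝ | ∃ S : Finset (Fin n), S.card = k ∧ q = ∑ i ∈ Sᶜ, |x i| ^ p} with hQ
  have hQfin : Q.Finite := by
    have : Q = (fun S : Finset (Fin n) => ∑ i ∈ Sᶜ, |x i| ^ p) '' {S | S.card = k} := by
      ext q
      simp only [hQ, mem_setOf_eq, Set.mem_image]
      constructor
      · rintro ⟨S, h1, h2⟩; exact ⟨S, h1, h2.symm⟩
      · rintro ⟨S, h1, h2⟩; exact ⟨S, h1, h2.symm⟩
    rw [this]
    exact Set.Finite.image _ (Set.toFinite _)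
  have hQne : Q.Nonempty := Qset_nonempty p x hk
  have hQbdd : BddBelow Q := ⟨0, fun q hq => Qset_nonneg p x q hq⟩
  have hmem : sInf Q ∈ Q := hQne.csInf_mem hQfin
  have hInf_nonneg : 0 ≤ sInf Q := Qset_nonneg p x _ hmem
  obtain ⟨S0, hS0c, hS0e⟩ := hmem
  rw [sigmaP]
  apply le_antisymm
  · refine csInf_le ⟨0, ?_⟩ ⟨S0, hS0c, by rw [← hS0e]⟩
    rintro e ⟨S, _, rfl⟩
    exact Real.rpow_nonneg (Finset.sum_nonneg fun i _ => Real.rpow_nonneg (abs_nonneg _) p) _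
  · refine le_csInf ⟨(∑ i ∈ S0ᶜ, |x i| ^ p) ^ (1/p), S0, hS0c, rfl⟩ ?_
    rintro e ⟨S, hSc, rfl⟩
    exact Real.rpow_le_rpow hInf_nonneg (csInf_le hQbdd ⟨S, hSc, rfl⟩) (by positivity)

lemma sigmaTilde_eq {n k : ℕ} (p : ℝ) (hp : 0 < p) (x : Fin n → ℝ) :
    sigmaTilde p n k x
      = ((sInf {q : ℝ | ∃ S : Finset (Fin n), S.card = k ∧ q = ∑ i ∈ Sᶜ, |x i| ^ p})
          / (∑ i, |x i| ^ p)) ^ (1/p) := by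
  rcases le_or_gt k n with hk | hk
  · have hInf_nonneg : 0 ≤ sInf {q : ℝ | ∃ S : Finset (Fin n), S.card = k ∧ q = ∑ i ∈ Sᶜ, |x i| ^ p} :=
      Real.sInf_nonneg (Qset_nonneg p x)
    rw [sigmaTilde, sigmaP_eq p hp hk x,
      Real.div_rpow hInf_nonneg (Finset.sum_nonneg fun i _ => Real.rpow_nonneg (abs_nonneg _) p)]
  · have hE : sigmaP p n k x = 0 := by
      rw [sigmaP]
      have : {e : ℝ | ∃ S : Finset (Fin n), S.card = k ∧ e = (∑ i ∈ Sᶜ, |x i| ^ p) ^ (1/p)} = ∅ := by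
        rw [Set.eq_empty_iff_forall_notMem]
        rintro e ⟨S, hc, _⟩
        have h1 : S.card ≤ n := by
          have := Finset.card_le_univ S
          rwa [Fintype.card_fin] at this
        omega
      rw [this, Real.sInf_empty]
    rw [sigmaTilde, hE, Qset_empty p x hk, Real.sInf_empty, zero_div, zero_div,
      Real.zero_rpow (one_div_ne_zero (ne_of_gt hp))]

/-- Deterministic convergence of the relative approximation error given empirical limits. -/
theorem det (p : ℝ) (hp : 0 < p) (x : ℕ → ℝ) (k : ℕ → ℕ) (r m Iτ : ℝ)
    (hm : 0 < m) (hIm : Iτ ≤ m)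
    (hS : Tendsto (fun n : ℕ => (∑ i ∈ Finset.range n, |x i| ^ p) / (n:ℝ)) atTop (𝓝 m))
    (hk : Tendsto (fun n : ℕ => (k n : ℝ) / (n:ℝ)) atTop (𝓝 r))
    (hU : ∀ ε : ℝ, 0 < ε → ∃ s cφ cI, cφ < r ∧ Iτ - ε ≤ cI ∧
      Tendsto (fun n : ℕ =>
        (∑ i ∈ Finset.range n, (if s ≤ |x i| then (1:ℝ) else 0)) / (n:ℝ)) atTop (𝓝 cφ) ∧
      Tendsto (fun n : ℕ =>
        (∑ i ∈ Finset.range n, (if s ≤ |x i| then |x i| ^ p else 0)) / (n:ℝ)) atTop (𝓝 cI))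
    (hL : ∀ ε : ℝ, 0 < ε → (m ≤ Iτ + ε) ∨ ∃ s cφ cI, r < cφ ∧ cI ≤ Iτ + ε ∧
      Tendsto (fun n : ℕ =>
        (∑ i ∈ Finset.range n, (if s ≤ |x i| then (1:ℝ) else 0)) / (n:ℝ)) atTop (𝓝 cφ) ∧
      Tendsto (fun n : ℕ =>
        (∑ i ∈ Finset.range n, (if s ≤ |x i| then |x i| ^ p else 0)) / (n:ℝ)) atTop (𝓝 cI)) :
    Tendsto (fun n : ℕ => sigmaTilde p n (k n) (proj n x)) atTop
      (𝓝 ((1 - Iτ / m) ^ (1 / p))) := by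
  classical
  set u : ℕ → ℝ := fun n =>
    sInf {q : ℝ | ∃ S : Finset (Fin n), S.card = k n ∧ q = ∑ i ∈ Sᶜ, |x (i:ℕ)| ^ p} with hu
  set Sn : ℕ → ℝ := fun n => ∑ i ∈ Finset.range n, |x i| ^ p with hSn
  have hterm_nonneg : ∀ (n : ℕ) (i : Fin n), 0 ≤ |x (i:ℕ)| ^ p :=
    fun n i => Real.rpow_nonneg (abs_nonneg _) p
  have hu_nonneg : ∀ n, 0 ≤ u n := by
    intro n
    apply Real.sInf_nonneg
    rintro q ⟨S, _, rfl⟩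
    exact Finset.sum_nonneg fun i _ => hterm_nonneg n i
  have hstep : ∀ n, sigmaTilde p n (k n) (proj n x) = (u n / Sn n) ^ (1/p) := by
    intro n
    rw [sigmaTilde_eq p hp (proj n x)]
    congr 2
    exact Fin.sum_univ_eq_sum_range (fun i => |x i| ^ p) n
  have hcnt_eq : ∀ (s : ℝ) (n : ℕ), (∑ i ∈ Finset.range n, (if s ≤ |x i| then (1:ℝ) else 0))
      = ((Finset.univ.filter (fun i : Fin n => s ≤ |x (i:ℕ)|)).card : ℝ) := by
    intro s n
    rw [← Fin.sum_univ_eq_sum_range (fun i => if s ≤ |x i| then (1:ℝ) else 0) n,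
      Finset.sum_boole]
  have hwt_eq : ∀ (s : ℝ) (n : ℕ), (∑ i ∈ Finset.range n, (if s ≤ |x i| then |x i| ^ p else 0))
      = ∑ i ∈ Finset.univ.filter (fun i : Fin n => s ≤ |x (i:ℕ)|), |x (i:ℕ)| ^ p := by
    intro s n
    rw [← Fin.sum_univ_eq_sum_range (fun i => if s ≤ |x i| then |x i| ^ p else 0) n,
      Finset.sum_filter]
  -- Step B
  have hB : Tendsto (fun n : ℕ => u n / (n:ℝ)) atTop (𝓝 (m - Iτ)) := by
    rw [Metric.tendsto_atTop]
    intro ε hε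
    have hupper : ∀ᶠ n in atTop, u n / (n:ℝ) ≤ (m - Iτ) + ε/2 := by
      obtain ⟨s, cφ, cI, hcφ, hcI, hcnt, hwt⟩ := hU (ε/4) (by linarith)
      have h1 := hcnt.eventually_lt hk hcφ
      have h2 := hS.sub hwt
      have h3 := h2.eventually (eventually_le_nhds (show m - cI < m - cI + ε/4 by linarith))
      filter_upwards [h1, h3, eventually_ge_atTop 1] with n hn1 hn3 hn4
      have hnpos : (0:ℝ) < (n:ℝ) := by exact_mod_cast hn4
      by_cases hkn : k n ≤ n
      · set B := Finset.univ.filter (fun i : Fin n => s ≤ |x (i:ℕ)|) with hBdef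
        have hcardlt : B.card < k n := by
          rw [hcnt_eq s n] at hn1
          rw [div_lt_div_iff₀ hnpos hnpos] at hn1
          have : (B.card : ℝ) < (k n : ℝ) := by nlinarith
          exact_mod_cast this
        obtain ⟨S, hBS, hScard⟩ := Finset.exists_superset_card_eq (le_of_lt hcardlt)
          (by rwa [Fintype.card_fin])
        have hle1 : u n ≤ ∑ i ∈ Sᶜ, |x (i:ℕ)| ^ p := by
          refine csInf_le ⟨0, ?_⟩ ⟨S, hScard, rfl⟩
          rintro q ⟨S', _, rfl⟩
          exact Finset.sum_nonneg fun i _ => hterm_nonneg n i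
        have hle2 : ∑ i ∈ Sᶜ, |x (i:ℕ)| ^ p ≤ ∑ i ∈ Bᶜ, |x (i:ℕ)| ^ p :=
          Finset.sum_le_sum_of_subset_of_nonneg (Finset.compl_subset_compl.2 hBS)
            (fun i _ _ => hterm_nonneg n i)
        have hle3 : ∑ i ∈ Bᶜ, |x (i:ℕ)| ^ p
            = Sn n - ∑ i ∈ Finset.range n, (if s ≤ |x i| then |x i| ^ p else 0) := by
          have hsplit := Finset.sum_compl_add_sum B (fun i : Fin n => |x (i:ℕ)| ^ p)
          have htot : (∑ i : Fin n, |x (i:ℕ)| ^ p) = Sn n :=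
            Fin.sum_univ_eq_sum_range (fun i => |x i| ^ p) n
          rw [hwt_eq s n]
          linarith
        have h6 : u n ≤ Sn n - ∑ i ∈ Finset.range n, (if s ≤ |x i| then |x i| ^ p else 0) := by
          linarith
        have h7 : u n / (n:ℝ)
            ≤ (Sn n - ∑ i ∈ Finset.range n, (if s ≤ |x i| then |x i| ^ p else 0)) / (n:ℝ) :=
          (div_le_div_iff_of_pos_right hnpos).2 h6
        rw [sub_div] at h7
        have h8 : Sn n / (n:ℝ)
            - (∑ i ∈ Finset.range n, (if s ≤ |x i| then |x i| ^ p else 0)) / (n:ℝ)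
            ≤ m - cI + ε/4 := hn3
        linarith
      · push_neg at hkn
        have hQempty : {q : ℝ | ∃ S : Finset (Fin n), S.card = k n
            ∧ q = ∑ i ∈ Sᶜ, |x (i:ℕ)| ^ p} = ∅ := Qset_empty p (proj n x) hkn
        have hu0 : u n = 0 := by
          rw [hu]
          simp only []
          rw [hQempty, Real.sInf_empty]
        rw [hu0, zero_div]
        linarith
    have hlower : ∀ᶠ n in atTop, (m - Iτ) - ε/2 ≤ u n / (n:ℝ) := by
      rcases hL (ε/4) (by linarith) with hcase | ⟨s, cφ, cI, hcφ, hcI, hcnt, hwt⟩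
      · refine Eventually.of_forall fun n => ?_
        have h0 : 0 ≤ u n / (n:ℝ) := div_nonneg (hu_nonneg n) (Nat.cast_nonneg n)
        linarith
      · have h1 := hk.eventually_lt hcnt hcφ
        have h2 := hS.sub hwt
        have h3 := h2.eventually (eventually_ge_nhds (show m - cI - ε/4 < m - cI by linarith))
        filter_upwards [h1, h3, eventually_ge_atTop 1] with n hn1 hn3 hn4
        have hnpos : (0:ℝ) < (n:ℝ) := by exact_mod_cast hn4
        set B := Finset.univ.filter (fun i : Fin n => s ≤ |x (i:ℕ)|) with hBdef
        have hcardgt : k n < B.card := by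
          rw [hcnt_eq s n] at hn1
          rw [div_lt_div_iff₀ hnpos hnpos] at hn1
          have : (k n : ℝ) < (B.card : ℝ) := by nlinarith
          exact_mod_cast this
        have hBn : B.card ≤ n := by
          have := Finset.card_le_univ B
          rwa [Fintype.card_fin] at this
        have hkn : k n ≤ n := le_trans (le_of_lt hcardgt) hBn
        have hQne : {q : ℝ | ∃ S : Finset (Fin n), S.card = k n
            ∧ q = ∑ i ∈ Sᶜ, |x (i:ℕ)| ^ p}.Nonempty := Qset_nonempty p (proj n x) hkn
        have hul : Sn n - ∑ i ∈ Finset.range n, (if s ≤ |x i| then |x i| ^ p else 0) ≤ u n := by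
          refine le_csInf hQne ?_
          rintro q ⟨S, hScard, rfl⟩
          have hkey := key_sum_le x p s (le_of_lt hp) S
            (by rw [hScard]; exact le_of_lt hcardgt)
          have hsplit := Finset.sum_compl_add_sum S (fun i : Fin n => |x (i:ℕ)| ^ p)
          have htot : (∑ i : Fin n, |x (i:ℕ)| ^ p) = Sn n :=
            Fin.sum_univ_eq_sum_range (fun i => |x i| ^ p) n
          rw [hwt_eq s n]
          have hBsum := hkey
          rw [← hBdef] at hBsum
          linarith
        have h7 : (Sn n - ∑ i ∈ Finset.range n, (if s ≤ |x i| then |x i| ^ p else 0)) / (n:ℝ)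
            ≤ u n / (n:ℝ) := (div_le_div_iff_of_pos_right hnpos).2 hul
        rw [sub_div] at h7
        have h8 : m - cI - ε/4
            ≤ Sn n / (n:ℝ)
              - (∑ i ∈ Finset.range n, (if s ≤ |x i| then |x i| ^ p else 0)) / (n:ℝ) := hn3
        linarith
    rw [eventually_atTop] at hupper hlower
    obtain ⟨N1, hN1⟩ := hupper
    obtain ⟨N2, hN2⟩ := hlower
    refine ⟨max N1 N2, fun n hn => ?_⟩
    have ha := hN1 n (le_trans (le_max_left _ _) hn)
    have hb := hN2 n (le_trans (le_max_right _ _) hn)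
    rw [Real.dist_eq]
    have : |u n / (n:ℝ) - (m - Iτ)| ≤ ε/2 := abs_le.2 ⟨by linarith, by linarith⟩
    linarith
  -- Step C
  have hC : Tendsto (fun n : ℕ => u n / Sn n) atTop (𝓝 ((m - Iτ)/m)) := by
    have hdiv := hB.div hS (ne_of_gt hm)
    refine Tendsto.congr' ?_ hdiv
    filter_upwards [eventually_ge_atTop 1] with n hn
    have hnne : (n:ℝ) ≠ 0 := Nat.cast_ne_zero.2 (by omega)
    show (u n / (n:ℝ)) / ((∑ i ∈ Finset.range n, |x i| ^ p) / (n:ℝ)) = u n / Sn n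
    rcases eq_or_ne (Sn n) 0 with h0 | h0
    · rw [show (∑ i ∈ Finset.range n, |x i| ^ p) = Sn n from rfl, h0, zero_div, div_zero, div_zero]
    · rw [show (∑ i ∈ Finset.range n, |x i| ^ p) = Sn n from rfl]
      field_simp
  have hcont : ContinuousAt (fun y : ℝ => y ^ (1/p)) ((m - Iτ)/m) :=
    Real.continuousAt_rpow_const _ _ (Or.inr (by positivity))
  have hfinal := hcont.tendsto.comp hC
  have hlim_eq : ((m - Iτ)/m) ^ (1/p) = (1 - Iτ/m) ^ (1/p) := by
    congr 1
    field_simp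
  rw [show (𝓝 ((1 - Iτ / m) ^ (1 / p))) = 𝓝 (((m - Iτ)/m) ^ (1/p)) by rw [hlim_eq]]
  exact hfinal.congr fun n => (hstep n).symm

end DetAux

/-- Theorem 1, part (ii): AMS ergodic process with finite positive `p`-th marginal moment and
absolutely continuous 1D stationary marginal: every rate `r ∈ (0,1]` is attained as a tail
probability `μ̄₁(B_{τ(r)}) = r`, and the relative approximation error converges a.s. to
`(1 − v_p(B_{τ(r)}))^{1/p}`. -/
theorem ams_ergodic_ac_approx_error
    (p : ℝ) (hp : 0 < p) (μ ν : Measure (ℕ → ℝ))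
    [IsProbabilityMeasure μ] [IsProbabilityMeasure ν]
    (hAMS : HasStationaryMean μ ν) (herg : IsErgodicShift μ)
    (hmom0 : 0 < momentP p (marginal1 ν)) (hmomfin : momentP p (marginal1 ν) < ∞)
    (hac : marginal1 ν ≪ (volume : Measure ℝ)) :
    ∀ r ∈ Set.Ioc (0:ℝ) 1,
      (∃ τ : ℝ, 0 ≤ τ ∧ phiTail (marginal1 ν) τ = r) ∧
      ∀ τ : ℝ, 0 ≤ τ → phiTail (marginal1 ν) τ = r →
        ∀ k : ℕ → ℕ, Tendsto (fun n : ℕ => (k n : ℝ) / n) atTop (𝓝 r) →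
          ∀ᵐ x ∂μ, Tendsto (fun n : ℕ => sigmaTilde p n (k n) (proj n x)) atTop
            (𝓝 ((1 - vP p (marginal1 ν) (Btau τ)) ^ (1 / p))) := by
  intro r hr
  have he0 : Measurable (fun x : ℕ → ℝ => x 0) := measurable_pi_apply 0
  haveI hν₁ : IsProbabilityMeasure (marginal1 ν) := by
    unfold marginal1
    exact Measure.isProbabilityMeasure_map he0.aemeasurable
  have hat : ∀ t : ℝ, marginal1 ν {t} = 0 := fun t => hac (Real.volume_singleton)
  have habsm : Measurable (fun t : ℝ => |t| ^ p) :=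
    ((Real.continuous_rpow_const (le_of_lt hp)).comp continuous_abs).measurable
  set ρ : Measure ℝ := (marginal1 ν).withDensity (fun t => ENNReal.ofReal (|t| ^ p)) with hρdef
  have hρB : ∀ B : Set ℝ, MeasurableSet B →
      ρ B = ∫⁻ t in B, ENNReal.ofReal (|t| ^ p) ∂(marginal1 ν) :=
    fun B hB => withDensity_apply _ hB
  have hρuniv : ρ univ = momentP p (marginal1 ν) := by
    rw [hρB univ MeasurableSet.univ, Measure.restrict_univ]
    rfl
  haveI hρfin : IsFiniteMeasure ρ := ⟨by rw [hρuniv]; exact hmomfin⟩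
  set m := (momentP p (marginal1 ν)).toReal with hmdef
  have hm : 0 < m := ENNReal.toReal_pos (ne_of_gt hmom0) (ne_of_lt hmomfin)
  have hρa : ρ ≪ marginal1 ν := withDensity_absolutelyContinuous _ _
  refine ⟨ThreshAux.exists_tau hat hr, ?_⟩
  intro τ hτ0 hφτ k hk
  set Iτ := (ρ (Btau τ)).toReal with hIτdef
  have hIm : Iτ ≤ m := by
    have h1 : ρ (Btau τ) ≤ ρ univ := measure_mono (subset_univ _)
    have h2 := ENNReal.toReal_mono (by rw [hρuniv]; exact ne_of_lt hmomfin) h1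
    rwa [hρuniv] at h2
  have hvP : vP p (marginal1 ν) (Btau τ) = Iτ / m := by
    rw [vP, ← withDensity_apply _ (TailAux.measurableSet_Btau τ), ← hρdef,
      ENNReal.toReal_div, hIτdef, hmdef]
  rw [show (𝓝 ((1 - vP p (marginal1 ν) (Btau τ)) ^ (1/p)))
      = 𝓝 ((1 - Iτ / m) ^ (1/p)) by rw [hvP]]
  -- integrability and integral identities
  have hIh₀ : Integrable (fun t : ℝ => |t| ^ p) (marginal1 ν) := by
    refine ⟨habsm.aestronglyMeasurable, ?_⟩
    rw [hasFiniteIntegral_iff_ofReal (Eventually.of_forall fun t =>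
      Real.rpow_nonneg (abs_nonneg t) p)]
    exact hmomfin
  have hint₀ : ∫ t, |t| ^ p ∂(marginal1 ν) = m := by
    rw [integral_eq_lintegral_of_nonneg_ae (Eventually.of_forall fun t =>
      Real.rpow_nonneg (abs_nonneg t) p) habsm.aestronglyMeasurable]
    rfl
  have hfun_cnt : ∀ s : ℝ, (fun t : ℝ => if s ≤ |t| then (1:ℝ) else 0)
      = (Btau s).indicator (fun _ => (1:ℝ)) := by
    intro s
    funext t
    rw [Set.indicator_apply]
    by_cases h : s ≤ |t|
    · rw [if_pos h, if_pos (TailAux.mem_Btau.2 h)]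
    · rw [if_neg h, if_neg (fun hmem => h (TailAux.mem_Btau.1 hmem))]
  have hfun_wt : ∀ s : ℝ, (fun t : ℝ => if s ≤ |t| then |t| ^ p else 0)
      = (Btau s).indicator (fun t => |t| ^ p) := by
    intro s
    funext t
    rw [Set.indicator_apply]
    by_cases h : s ≤ |t|
    · rw [if_pos h, if_pos (TailAux.mem_Btau.2 h)]
    · rw [if_neg h, if_neg (fun hmem => h (TailAux.mem_Btau.1 hmem))]
  have hcnt_meas : ∀ s : ℝ, Measurable (fun t : ℝ => if s ≤ |t| then (1:ℝ) else 0) := by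
    intro s
    rw [hfun_cnt s]
    exact measurable_const.indicator (TailAux.measurableSet_Btau s)
  have hwt_meas : ∀ s : ℝ, Measurable (fun t : ℝ => if s ≤ |t| then |t| ^ p else 0) := by
    intro s
    rw [hfun_wt s]
    exact habsm.indicator (TailAux.measurableSet_Btau s)
  have hcnt_int : ∀ s : ℝ, Integrable (fun t : ℝ => if s ≤ |t| then (1:ℝ) else 0) (marginal1 ν) := by
    intro s
    rw [hfun_cnt s]
    exact (integrable_const (1:ℝ)).indicator (TailAux.measurableSet_Btau s)
  have hwt_int : ∀ s : ℝ, Integrable (fun t : ℝ => if s ≤ |t| then |t| ^ p else 0) (marginal1 ν) := by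
    intro s
    rw [hfun_wt s]
    exact hIh₀.indicator (TailAux.measurableSet_Btau s)
  have hcnt_integral : ∀ s : ℝ,
      ∫ t, (if s ≤ |t| then (1:ℝ) else 0) ∂(marginal1 ν) = phiTail (marginal1 ν) s := by
    intro s
    rw [hfun_cnt s, integral_indicator_const (1:ℝ) (TailAux.measurableSet_Btau s)]
    rw [smul_eq_mul, mul_one]
    rfl
  have hwt_integral : ∀ s : ℝ,
      ∫ t, (if s ≤ |t| then |t| ^ p else 0) ∂(marginal1 ν) = (ρ (Btau s)).toReal := by
    intro s
    rw [hfun_wt s, integral_indicator (TailAux.measurableSet_Btau s)]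
    rw [integral_eq_lintegral_of_nonneg_ae (Eventually.of_forall fun t =>
      Real.rpow_nonneg (abs_nonneg t) p) habsm.aestronglyMeasurable]
    rw [← withDensity_apply _ (TailAux.measurableSet_Btau s), ← hρdef]
  -- master convergences
  have hae₀ : ∀ᵐ x ∂μ, Tendsto (fun n : ℕ =>
      (∑ i ∈ Finset.range n, |x i| ^ p) / (n:ℝ)) atTop (𝓝 m) := by
    have := AMSAux.master hAMS herg (fun t => |t| ^ p) habsm hIh₀
    rw [hint₀] at this
    exact this
  have hae_cnt : ∀ s : ℝ, ∀ᵐ x ∂μ, Tendsto (fun n : ℕ =>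
      (∑ i ∈ Finset.range n, (if s ≤ |x i| then (1:ℝ) else 0)) / (n:ℝ)) atTop
      (𝓝 (phiTail (marginal1 ν) s)) := by
    intro s
    have := AMSAux.master hAMS herg (fun t => if s ≤ |t| then (1:ℝ) else 0)
      (hcnt_meas s) (hcnt_int s)
    rw [hcnt_integral s] at this
    exact this
  have hae_wt : ∀ s : ℝ, ∀ᵐ x ∂μ, Tendsto (fun n : ℕ =>
      (∑ i ∈ Finset.range n, (if s ≤ |x i| then |x i| ^ p else 0)) / (n:ℝ)) atTop
      (𝓝 ((ρ (Btau s)).toReal)) := by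
    intro s
    have := AMSAux.master hAMS herg (fun t => if s ≤ |t| then |t| ^ p else 0)
      (hwt_meas s) (hwt_int s)
    rw [hwt_integral s] at this
    exact this
  obtain ⟨sU, hsUφ, hsUI⟩ := ThreshAux.exists_sU ρ hat hρa hr.1 hr.2 hφτ
  by_cases hex : ∃ s : ℝ, r < phiTail (marginal1 ν) s
  · obtain ⟨sL, hsLφ, hsLI⟩ := ThreshAux.exists_sL ρ hat hρa hr.1 hφτ hex
    have haecU : ∀ᵐ x ∂μ, ∀ j : ℕ, Tendsto (fun n : ℕ =>
        (∑ i ∈ Finset.range n, (if sU j ≤ |x i| then (1:ℝ) else 0)) / (n:ℝ)) atTop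
        (𝓝 (phiTail (marginal1 ν) (sU j))) := ae_all_iff.2 fun j => hae_cnt (sU j)
    have haewU : ∀ᵐ x ∂μ, ∀ j : ℕ, Tendsto (fun n : ℕ =>
        (∑ i ∈ Finset.range n, (if sU j ≤ |x i| then |x i| ^ p else 0)) / (n:ℝ)) atTop
        (𝓝 ((ρ (Btau (sU j))).toReal)) := ae_all_iff.2 fun j => hae_wt (sU j)
    have haecL : ∀ᵐ x ∂μ, ∀ j : ℕ, Tendsto (fun n : ℕ =>
        (∑ i ∈ Finset.range n, (if sL j ≤ |x i| then (1:ℝ) else 0)) / (n:ℝ)) atTop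
        (𝓝 (phiTail (marginal1 ν) (sL j))) := ae_all_iff.2 fun j => hae_cnt (sL j)
    have haewL : ∀ᵐ x ∂μ, ∀ j : ℕ, Tendsto (fun n : ℕ =>
        (∑ i ∈ Finset.range n, (if sL j ≤ |x i| then |x i| ^ p else 0)) / (n:ℝ)) atTop
        (𝓝 ((ρ (Btau (sL j))).toReal)) := ae_all_iff.2 fun j => hae_wt (sL j)
    filter_upwards [hae₀, haecU, haewU, haecL, haewL] with x hx0 hxcU hxwU hxcL hxwL
    refine DetAux.det p hp x k r m Iτ hm hIm hx0 hk ?_ ?_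
    · intro ε hε
      obtain ⟨j, hj⟩ := (hsUI.eventually (eventually_ge_nhds
        (show Iτ - ε < Iτ by linarith))).exists
      exact ⟨sU j, phiTail (marginal1 ν) (sU j), (ρ (Btau (sU j))).toReal,
        hsUφ j, hj, hxcU j, hxwU j⟩
    · intro ε hε
      right
      obtain ⟨j, hj⟩ := (hsLI.eventually (eventually_le_nhds
        (show Iτ < Iτ + ε by linarith))).exists
      exact ⟨sL j, phiTail (marginal1 ν) (sL j), (ρ (Btau (sL j))).toReal,
        hsLφ j, hj, hxcL j, hxwL j⟩
  · push_neg at hex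
    have hIτm : Iτ = m := by
      have hφτ1 : phiTail (marginal1 ν) (-1) = 1 := by
        rw [phiTail, TailAux.Btau_nonpos (by norm_num), measure_univ]
        simp
      have hr1 : r = 1 := by
        have := hex (-1)
        rw [hφτ1] at this
        linarith [hr.2]
      have hν₁Bτ : (marginal1 ν) (Btau τ) = 1 := by
        have h2 : ((marginal1 ν) (Btau τ)).toReal = 1 := by
          have : phiTail (marginal1 ν) τ = r := hφτ
          rw [phiTail] at this
          rw [this, hr1]
        exact (ENNReal.toReal_eq_one_iff _).1 h2
      have hcompl : (marginal1 ν) (Btau τ)ᶜ = 0 := by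
        rw [measure_compl (TailAux.measurableSet_Btau τ) (measure_ne_top _ _), hν₁Bτ,
          measure_univ, tsub_self]
      have hρcompl : ρ (Btau τ)ᶜ = 0 := hρa hcompl
      have hρeq : ρ (Btau τ) = ρ univ := by
        refine le_antisymm (measure_mono (subset_univ _)) ?_
        calc ρ univ = ρ ((Btau τ) ∪ (Btau τ)ᶜ) := by rw [union_compl_self]
          _ ≤ ρ (Btau τ) + ρ (Btau τ)ᶜ := measure_union_le _ _
          _ = ρ (Btau τ) := by rw [hρcompl, add_zero]
      rw [hIτdef, hρeq, hρuniv]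
    have haecU : ∀ᵐ x ∂μ, ∀ j : ℕ, Tendsto (fun n : ℕ =>
        (∑ i ∈ Finset.range n, (if sU j ≤ |x i| then (1:ℝ) else 0)) / (n:ℝ)) atTop
        (𝓝 (phiTail (marginal1 ν) (sU j))) := ae_all_iff.2 fun j => hae_cnt (sU j)
    have haewU : ∀ᵐ x ∂μ, ∀ j : ℕ, Tendsto (fun n : ℕ =>
        (∑ i ∈ Finset.range n, (if sU j ≤ |x i| then |x i| ^ p else 0)) / (n:ℝ)) atTop
        (𝓝 ((ρ (Btau (sU j))).toReal)) := ae_all_iff.2 fun j => hae_wt (sU j)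
    filter_upwards [hae₀, haecU, haewU] with x hx0 hxcU hxwU
    refine DetAux.det p hp x k r m Iτ hm hIm hx0 hk ?_ ?_
    · intro ε hε
      obtain ⟨j, hj⟩ := (hsUI.eventually (eventually_ge_nhds
        (show Iτ - ε < Iτ by linarith))).exists
      exact ⟨sU j, phiTail (marginal1 ν) (sU j), (ρ (Btau (sU j))).toReal,
        hsUφ j, hj, hxcU j, hxwU j⟩
    · intro ε hε
      left
      rw [hIτm]
      linarith

end
end
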